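/- Generator identity underlying the exponential duality: In the exchangeable case, for every x ∈ ℰ, every finitely supported α ∈ [0,∞)^G, and every finitely supported κ ∈ (ℕ₀^M)^G, all of the series below converge absolutely and (Ω_X H((α,κ),·))(x) = (Ω_{(α,κ)} H(·,x))(α,κ) + β(α,κ) · H((α,κ),x), where Ω_X acts on the x-variable, Ω_{(α,κ)} acts on the (α,κ)-variables, and β(α,κ) := γ Σ_{ξ∈G} ( Σ_{m=1}^M C(κ^m_ξ,2) − α_ξ κ̄_ξ + K κ̄_ξ ) with C(k,2) = k(k−1)/2. -/

import Mathlib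

open MeasureTheory Filter Set
open scoped ENNReal NNReal BigOperators Classical

noncomputable section

/-! ### Random walk kernels and the Liggett–Spitzer weight -/

structure IsRWKernel {G : Type} [AddCommGroup G] (a : G → G → ℝ) : Prop where
  nonneg : ∀ ξ η, 0 ≤ a ξ η
  le_one : ∀ ξ η, a ξ η ≤ 1
  homog : ∀ η ξ : G, a η ξ = a 0 (ξ - η)
  total : HasSum (fun ξ : G => a 0 ξ) 1

/-- symmetrized kernel â -/
def ahat {G : Type} (a : G → G → ℝ) (ξ η : G) : ℝ := (a ξ η + a η ξ) / 2

/-- reversed kernel ā -/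
def abar {G : Type} (a : G → G → ℝ) (ξ η : G) : ℝ := a η ξ

/-- n-step iterates of a kernel -/
noncomputable def kiter {G : Type} (p : G → G → ℝ) : ℕ → G → G → ℝ
  | 0 => fun η ξ => if η = ξ then 1 else 0
  | (n + 1) => fun η ξ => ∑' ζ : G, kiter p n η ζ * p ζ ξ

/-- the Liggett–Spitzer weight ρ -/
noncomputable def LSweight {G : Type} (a : G → G → ℝ) (R : ℝ) (β : G → ℝ) (ξ : G) : ℝ :=
  ∑' η : G, ∑' n : ℕ, ((R / 2) ^ n)⁻¹ * kiter (ahat a) n η ξ * β η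

/-- the standing assumptions: `a` is a random walk kernel, `R > 2`,
`β` strictly positive and summable. -/
def IsLSData {G : Type} [AddCommGroup G] (a : G → G → ℝ) (R : ℝ) (β : G → ℝ) : Prop :=
  IsRWKernel a ∧ 2 < R ∧ (∀ η, 0 < β η) ∧ Summable β

/-- continuous-time transition kernel associated with a discrete kernel -/
noncomputable def ctk {G : Type} (p : G → G → ℝ) (t : ℝ) (η ξ : G) : ℝ :=
  Real.exp (-t) * ∑' n : ℕ, t ^ n / (n.factorial : ℝ) * kiter p n η ξ

/-! ### configurations and state spaces -/

/-- total mass at a site -/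
def xbar {G : Type} {M : ℕ} (x : G → Fin M → ℝ) (ξ : G) : ℝ := ∑ m, x ξ m

/-- the Liggett–Spitzer state space ℰ -/
def stateE {G : Type} (ρ : G → ℝ) (M : ℕ) : Set (G → Fin M → ℝ) :=
  {x | (∀ ξ m, 0 ≤ x ξ m) ∧ Summable (fun ξ => ρ ξ * xbar x ξ)}

/-- the particle state space ℰ^par = ℰ ∩ (ℕ₀^M)^G -/
def statePar {G : Type} (ρ : G → ℝ) (M : ℕ) : Set (G → Fin M → ℝ) :=
  {x | x ∈ stateE ρ M ∧ ∀ ξ m, ∃ k : ℕ, x ξ m = (k : ℝ)}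

/-- the rescaled particle state space εℰ^par -/
def stateParEps {G : Type} (ρ : G → ℝ) (M : ℕ) (ε : ℝ) : Set (G → Fin M → ℝ) :=
  {z | ∃ w ∈ statePar ρ M, z = ε • w}

/-- the configuration with a single type-`m` particle at site `ξ` -/
def evec {G : Type} {M : ℕ} (m : Fin M) (ξ : G) : G → Fin M → ℝ :=
  fun η n => if η = ξ ∧ n = m then 1 else 0

/-! ### martingale problems -/

/-- càdlàg paths -/
def IsCadlag {S : Type*} [TopologicalSpace S] (f : ℝ → S) : Prop :=
  (∀ t : ℝ, ContinuousWithinAt f (Set.Ici t) t) ∧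
  ∀ t : ℝ, ∃ L, Filter.Tendsto f (nhdsWithin t (Set.Iio t)) (nhds L)

/-- A solution of the `(Gen, Dom, ν)` martingale problem: an adapted stochastic
process on a filtered probability space, with paths satisfying `PathProp`
(càdlàg resp. continuous), taking values, at nonnegative times, in the state
space `E`, with initial law `ν`, such that for every `f ∈ Dom` the process
`f(X t) − ∫_0^t Gen f (X s) ds` is a martingale. -/
structure MPSol (S : Type) [TopologicalSpace S] [MeasurableSpace S]
    (Gen : (S → ℝ) → S → ℝ) (Dom : Set (S → ℝ)) (E : Set S)
    (PathProp : (ℝ → S) → Prop) (ν : Measure S) where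
  (Ω : Type)
  [mΩ : MeasurableSpace Ω]
  (P : Measure Ω)
  (isProb : IsProbabilityMeasure P)
  (F : MeasureTheory.Filtration ℝ mΩ)
  (X : ℝ → Ω → S)
  (adapted : MeasureTheory.Adapted F X)
  (paths : ∀ ω, PathProp fun t => X t ω)
  (mem_state : ∀ ω t, 0 ≤ t → X t ω ∈ E)
  (init_law : Measure.map (X 0) P = ν)
  (mart : ∀ f ∈ Dom,
    MeasureTheory.Martingale
      (fun t ω => f (X t ω) - ∫ s in (0:ℝ)..t, Gen f (X s ω)) F P)

attribute [instance] MPSol.mΩ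

/-! ### the particle generator -/

/-- the particle generator Ω_Z, with site sums restricted to `G'`
(take `G' = Set.univ` for the full generator). -/
noncomputable def particleGenR {G : Type} {M : ℕ} (a : G → G → ℝ)
    (γ K : Fin M → ℝ) (lam : Fin M → Fin M → ℝ) (G' : Set G)
    (f : (G → Fin M → ℝ) → ℝ) (z : G → Fin M → ℝ) : ℝ :=
  (∑' q : Fin M × G × G, (if q.2.1 ∈ G' ∧ q.2.2 ∈ G' then (1:ℝ) else 0) *
      (z q.2.1 q.1 * a q.2.1 q.2.2 *
        (f (z + evec q.1 q.2.2 - evec q.1 q.2.1) - f z)))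
  + (∑' q : Fin M × G, (if q.2 ∈ G' then (1:ℝ) else 0) *
      (γ q.1 * (1 / 2 + K q.1) * z q.2 q.1 * (f (z + evec q.1 q.2) - f z)))
  + (∑' q : Fin M × G, (if q.2 ∈ G' then (1:ℝ) else 0) *
      (γ q.1 * (1 / 2 + ∑ n, lam q.1 n * z q.2 n) * z q.2 q.1 *
        (f (z - evec q.1 q.2) - f z)))

/-- the particle generator Ω_Z -/
noncomputable def particleGen {G : Type} {M : ℕ} (a : G → G → ℝ)
    (γ K : Fin M → ℝ) (lam : Fin M → Fin M → ℝ) :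
    ((G → Fin M → ℝ) → ℝ) → (G → Fin M → ℝ) → ℝ :=
  particleGenR a γ K lam Set.univ

/-- the domain D(Ω_Z) of the particle generator: bounded measurable functions
for which the defining series converge absolutely on the state space and for
which Ω_Z f is bounded on the state space. -/
def particleDomR {G : Type} {M : ℕ} (a : G → G → ℝ) (γ K : Fin M → ℝ)
    (lam : Fin M → Fin M → ℝ) (G' : Set G) (ρ : G → ℝ) :
    Set ((G → Fin M → ℝ) → ℝ) :=
  {f | Measurable f ∧ (∃ C, ∀ z, |f z| ≤ C) ∧
    (∀ z ∈ statePar ρ M,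
      Summable (fun q : Fin M × G × G => |(if q.2.1 ∈ G' ∧ q.2.2 ∈ G' then (1:ℝ) else 0) *
        (z q.2.1 q.1 * a q.2.1 q.2.2 *
          (f (z + evec q.1 q.2.2 - evec q.1 q.2.1) - f z))|) ∧
      Summable (fun q : Fin M × G => |(if q.2 ∈ G' then (1:ℝ) else 0) *
        (γ q.1 * (1 / 2 + K q.1) * z q.2 q.1 * (f (z + evec q.1 q.2) - f z))|) ∧
      Summable (fun q : Fin M × G => |(if q.2 ∈ G' then (1:ℝ) else 0) *
        (γ q.1 * (1 / 2 + ∑ n, lam q.1 n * z q.2 n) * z q.2 q.1 *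
          (f (z - evec q.1 q.2) - f z))|)) ∧
    ∃ C, ∀ z ∈ statePar ρ M, |particleGenR a γ K lam G' f z| ≤ C}

def particleDom {G : Type} {M : ℕ} (a : G → G → ℝ) (γ K : Fin M → ℝ)
    (lam : Fin M → Fin M → ℝ) (ρ : G → ℝ) : Set ((G → Fin M → ℝ) → ℝ) :=
  particleDomR a γ K lam Set.univ ρ

/-! ### the ε-rescaled particle generator -/

/-- the ε-rescaled particle generator Ω_{Z^ε}, with site sums restricted
to `G'` (take `G' = Set.univ` for the full generator). -/
noncomputable def epsParticleGenR {G : Type} {M : ℕ} (a : G → G → ℝ)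
    (γ K : Fin M → ℝ) (lam : Fin M → Fin M → ℝ) (ε : ℝ) (G' : Set G)
    (f : (G → Fin M → ℝ) → ℝ) (z : G → Fin M → ℝ) : ℝ :=
  (∑' q : Fin M × G × G, (if q.2.1 ∈ G' ∧ q.2.2 ∈ G' then (1:ℝ) else 0) *
      ((z q.2.1 q.1 / ε) * a q.2.1 q.2.2 *
        (f (z + ε • evec q.1 q.2.2 - ε • evec q.1 q.2.1) - f z)))
  + (∑' q : Fin M × G, (if q.2 ∈ G' then (1:ℝ) else 0) *
      ((z q.2 q.1 / ε) * (γ q.1 / ε) * (1 / 2 + ε * K q.1) *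
        (f (z + ε • evec q.1 q.2) - f z)))
  + (∑' q : Fin M × G, (if q.2 ∈ G' then (1:ℝ) else 0) *
      ((z q.2 q.1 / ε) * (γ q.1 / ε) * (1 / 2 + ε * ∑ n, lam q.1 n * z q.2 n) *
        (f (z - ε • evec q.1 q.2) - f z)))

/-- the domain of the ε-rescaled particle generator. -/
def epsParticleDomR {G : Type} {M : ℕ} (a : G → G → ℝ) (γ K : Fin M → ℝ)
    (lam : Fin M → Fin M → ℝ) (ε : ℝ) (G' : Set G) (ρ : G → ℝ) :
    Set ((G → Fin M → ℝ) → ℝ) :=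
  {f | Measurable f ∧ (∃ C, ∀ z, |f z| ≤ C) ∧
    (∀ z ∈ stateParEps ρ M ε,
      Summable (fun q : Fin M × G × G => |(if q.2.1 ∈ G' ∧ q.2.2 ∈ G' then (1:ℝ) else 0) *
        ((z q.2.1 q.1 / ε) * a q.2.1 q.2.2 *
          (f (z + ε • evec q.1 q.2.2 - ε • evec q.1 q.2.1) - f z))|) ∧
      Summable (fun q : Fin M × G => |(if q.2 ∈ G' then (1:ℝ) else 0) *
        ((z q.2 q.1 / ε) * (γ q.1 / ε) * (1 / 2 + ε * K q.1) *
          (f (z + ε • evec q.1 q.2) - f z))|) ∧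
      Summable (fun q : Fin M × G => |(if q.2 ∈ G' then (1:ℝ) else 0) *
        ((z q.2 q.1 / ε) * (γ q.1 / ε) * (1 / 2 + ε * ∑ n, lam q.1 n * z q.2 n) *
          (f (z - ε • evec q.1 q.2) - f z))|)) ∧
    ∃ C, ∀ z ∈ stateParEps ρ M ε, |epsParticleGenR a γ K lam ε G' f z| ≤ C}

/-! ### the diffusion generator -/

/-- coordinate partial derivative ∂f/∂x^m_ξ -/
noncomputable def pderiv {G : Type} {M : ℕ} (m : Fin M) (ξ : G)
    (f : (G → Fin M → ℝ) → ℝ) (x : G → Fin M → ℝ) : ℝ :=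
  deriv (fun t : ℝ => f (x + t • evec m ξ)) 0

/-- all coordinate partial derivatives up to order three exist and are
continuous -/
def SmoothCoord3 {G : Type} {M : ℕ} (f : (G → Fin M → ℝ) → ℝ) : Prop :=
  Continuous f ∧
  (∀ (m : Fin M) (ξ : G),
    (∀ x, DifferentiableAt ℝ (fun t : ℝ => f (x + t • evec m ξ)) 0) ∧
    Continuous (pderiv m ξ f)) ∧
  (∀ (m₁ m₂ : Fin M) (ξ₁ ξ₂ : G),
    (∀ x, DifferentiableAt ℝ (fun t : ℝ => pderiv m₁ ξ₁ f (x + t • evec m₂ ξ₂)) 0) ∧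
    Continuous (pderiv m₂ ξ₂ (pderiv m₁ ξ₁ f))) ∧
  (∀ (m₁ m₂ m₃ : Fin M) (ξ₁ ξ₂ ξ₃ : G),
    (∀ x, DifferentiableAt ℝ
      (fun t : ℝ => pderiv m₂ ξ₂ (pderiv m₁ ξ₁ f) (x + t • evec m₃ ξ₃)) 0) ∧
    Continuous (pderiv m₃ ξ₃ (pderiv m₂ ξ₂ (pderiv m₁ ξ₁ f))))

/-- the diffusion generator Ω_X (recall ā(ξ,η) = a(η,ξ)) -/
noncomputable def diffGen {G : Type} {M : ℕ} (a : G → G → ℝ) (γ K : Fin M → ℝ)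
    (lam : Fin M → Fin M → ℝ)
    (f : (G → Fin M → ℝ) → ℝ) (x : G → Fin M → ℝ) : ℝ :=
  (∑' q : Fin M × G,
    ((∑' η : G, a η q.2 * (x η q.1 - x q.2 q.1))
      + γ q.1 * x q.2 q.1 * (K q.1 - ∑ n, lam q.1 n * x q.2 n))
    * pderiv q.1 q.2 f x)
  + (1 / 2) * ∑' q : Fin M × G, γ q.1 * x q.2 q.1 * pderiv q.1 q.2 (pderiv q.1 q.2 f) x

/-- the domain D(Ω_X): bounded continuous functions with continuous coordinate
partial derivatives up to order three, for which the series converge absolutely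
on ℰ and Ω_X f is bounded on ℰ. -/
def diffDom {G : Type} {M : ℕ} (a : G → G → ℝ) (γ K : Fin M → ℝ)
    (lam : Fin M → Fin M → ℝ) (ρ : G → ℝ) : Set ((G → Fin M → ℝ) → ℝ) :=
  {f | (∃ C, ∀ x, |f x| ≤ C) ∧ SmoothCoord3 f ∧
    (∀ x ∈ stateE ρ M,
      (∀ (m : Fin M) (ξ : G), Summable (fun η : G => |a η ξ * (x η m - x ξ m)|)) ∧
      Summable (fun q : Fin M × G =>
        |((∑' η : G, a η q.2 * (x η q.1 - x q.2 q.1))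
          + γ q.1 * x q.2 q.1 * (K q.1 - ∑ n, lam q.1 n * x q.2 n))
          * pderiv q.1 q.2 f x|) ∧
      Summable (fun q : Fin M × G =>
        |γ q.1 * x q.2 q.1 * pderiv q.1 q.2 (pderiv q.1 q.2 f) x|)) ∧
    ∃ C, ∀ x ∈ stateE ρ M, |diffGen a γ K lam f x| ≤ C}
/-! ### the dual process (exchangeable case) -/

/-- configuration with a single dual (type-m) particle at ξ -/
def ekap {G : Type} {M : ℕ} (m : Fin M) (ξ : G) : G → Fin M → ℕ :=
  fun η n => if η = ξ ∧ n = m then 1 else 0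

/-- total number of dual particles at a site -/
def kapbar {G : Type} {M : ℕ} (κ : G → Fin M → ℕ) (ξ : G) : ℕ := ∑ m, κ ξ m

/-- indicator configuration at a single site (in the α variables) -/
def e1 {G : Type} (ξ : G) : G → ℝ := fun η => if η = ξ then 1 else 0

/-- coordinate partial derivative ∂f/∂α_ξ in the α variables -/
noncomputable def aderiv {G : Type} {M : ℕ} (ξ : G)
    (f : (G → ℝ) × (G → Fin M → ℕ) → ℝ) (p : (G → ℝ) × (G → Fin M → ℕ)) : ℝ :=
  deriv (fun t : ℝ => f (p.1 + t • e1 ξ, p.2)) 0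

/-- the dual generator Ω_{(α,κ)} of the exchangeable model -/
noncomputable def dualGen {G : Type} {M : ℕ} (a : G → G → ℝ) (γ K lam : ℝ)
    (f : (G → ℝ) × (G → Fin M → ℕ) → ℝ) (p : (G → ℝ) × (G → Fin M → ℕ)) : ℝ :=
  (∑' q : Fin M × G × G,
    (p.2 q.2.1 q.1 : ℝ) * a q.2.2 q.2.1 *
      (f (p.1, fun η n => p.2 η n + ekap q.1 q.2.2 η n - ekap q.1 q.2.1 η n) - f p))
  + γ * (∑' q : Fin M × G,
      ((p.2 q.2 q.1 : ℝ) * ((p.2 q.2 q.1 : ℝ) - 1) / 2) *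
        (f (p.1, fun η n => p.2 η n - ekap q.1 q.2 η n) - f p))
  + (∑' q : G × G, a q.1 q.2 * (p.1 q.2 - p.1 q.1) * aderiv q.1 f p)
  + γ * (∑' ξ : G, p.1 ξ * (K - p.1 ξ / 2) * aderiv ξ f p)
  + γ * lam * (∑' ξ : G, p.1 ξ * aderiv ξ (aderiv ξ f) p)
  + γ * lam * (∑' ξ : G, (kapbar p.2 ξ : ℝ) * aderiv ξ f p)

/-- for each fixed κ, f(⬝,κ) is continuous with continuous coordinate partial
derivatives (in the α variables) up to order two -/
def DualSmooth {G : Type} {M : ℕ} (f : (G → ℝ) × (G → Fin M → ℕ) → ℝ) : Prop :=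
  (∀ κ, Continuous fun α : G → ℝ => f (α, κ)) ∧
  (∀ ξ : G,
    (∀ p : (G → ℝ) × (G → Fin M → ℕ),
      DifferentiableAt ℝ (fun t : ℝ => f (p.1 + t • e1 ξ, p.2)) 0) ∧
    ∀ κ, Continuous fun α : G → ℝ => aderiv ξ f (α, κ)) ∧
  (∀ ξ₁ ξ₂ : G,
    (∀ p : (G → ℝ) × (G → Fin M → ℕ),
      DifferentiableAt ℝ (fun t : ℝ => aderiv ξ₁ f (p.1 + t • e1 ξ₂, p.2)) 0) ∧
    ∀ κ, Continuous fun α : G → ℝ => aderiv ξ₂ (aderiv ξ₁ f) (α, κ))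

/-- the domain D(Ω_{(α,κ)}) of the dual generator -/
def dualDom {G : Type} {M : ℕ} (a : G → G → ℝ) (γ K lam : ℝ) :
    Set ((G → ℝ) × (G → Fin M → ℕ) → ℝ) :=
  {f | Measurable f ∧ (∃ C, ∀ p, |f p| ≤ C) ∧ DualSmooth f ∧
    (∀ p : (G → ℝ) × (G → Fin M → ℕ), (∀ ξ, 0 ≤ p.1 ξ) →
      Summable (fun q : Fin M × G × G => |(p.2 q.2.1 q.1 : ℝ) * a q.2.2 q.2.1 *
        (f (p.1, fun η n => p.2 η n + ekap q.1 q.2.2 η n - ekap q.1 q.2.1 η n) - f p)|) ∧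
      Summable (fun q : Fin M × G => |((p.2 q.2 q.1 : ℝ) * ((p.2 q.2 q.1 : ℝ) - 1) / 2) *
        (f (p.1, fun η n => p.2 η n - ekap q.1 q.2 η n) - f p)|) ∧
      Summable (fun q : G × G => |a q.1 q.2 * (p.1 q.2 - p.1 q.1) * aderiv q.1 f p|) ∧
      Summable (fun ξ : G => |p.1 ξ * (K - p.1 ξ / 2) * aderiv ξ f p|) ∧
      Summable (fun ξ : G => |p.1 ξ * aderiv ξ (aderiv ξ f) p|) ∧
      Summable (fun ξ : G => |(kapbar p.2 ξ : ℝ) * aderiv ξ f p|)) ∧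
    ∃ C, ∀ p : (G → ℝ) × (G → Fin M → ℕ), (∀ ξ, 0 ≤ p.1 ξ) →
      |dualGen a γ K lam f p| ≤ C}

/-- the duality function H((α,κ),x) -/
noncomputable def Hdual {G : Type} {M : ℕ} (α : G → ℝ) (κ : G → Fin M → ℕ)
    (x : G → Fin M → ℝ) : ℝ :=
  Real.exp (-(∑' ξ : G, α ξ * xbar x ξ)) * ∏ᶠ ξ : G, ∏ m : Fin M, x ξ m ^ κ ξ m

/-- the function β(α,κ) appearing in the Feynman–Kac correction -/
noncomputable def betaDual {G : Type} {M : ℕ} (γ K : ℝ) (α : G → ℝ)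
    (κ : G → Fin M → ℕ) : ℝ :=
  γ * ∑' ξ : G, ((∑ m, (κ ξ m : ℝ) * ((κ ξ m : ℝ) - 1) / 2)
    - α ξ * (kapbar κ ξ : ℝ) + K * (kapbar κ ξ : ℝ))

/-- the exchangeable-case Feynman–Kac exponent at time s -/
noncomputable def dualFK {G : Type} {M : ℕ} (K : ℝ) (α : G → ℝ)
    (κ : G → Fin M → ℕ) : ℝ :=
  (∑' q : Fin M × G, (κ q.2 q.1 : ℝ) * ((κ q.2 q.1 : ℝ) - 1) / 2)
  + ∑' ξ : G, (K - α ξ) * (kapbar κ ξ : ℝ)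

/-! ### STATEMENT 5: the generator identity underlying the exponential
duality -/

set_option maxHeartbeats 1000000
set_option linter.unusedSectionVars false
set_option linter.unusedVariables false

section PartI
variable {G : Type} [AddCommGroup G] [Countable G] {a : G → G → ℝ}

lemma rw_row (h : IsRWKernel a) (ξ : G) : HasSum (fun η => a ξ η) 1 := by
  have h2 : HasSum ((a 0) ∘ (Equiv.subRight ξ)) 1 := (Equiv.subRight ξ).hasSum_iff.mpr h.total
  refine h2.congr_fun fun η => ?_
  simp [Function.comp, ← h.homog]

lemma rw_col (h : IsRWKernel a) (ξ : G) : HasSum (fun η => a η ξ) 1 := by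
  have h2 : HasSum ((a 0) ∘ (Equiv.subLeft ξ)) 1 := (Equiv.subLeft ξ).hasSum_iff.mpr h.total
  refine h2.congr_fun fun η => ?_
  simp [Function.comp, ← h.homog]

lemma ahat_row (h : IsRWKernel a) (ξ : G) : HasSum (fun η => ahat a ξ η) 1 := by
  have := ((rw_row h ξ).add (rw_col h ξ)).div_const 2
  norm_num at this
  exact this.congr_fun fun η => rfl

lemma ahat_nonneg (h : IsRWKernel a) (ξ η : G) : 0 ≤ ahat a ξ η := by
  have := h.nonneg ξ η; have := h.nonneg η ξ; unfold ahat; linarith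

lemma kiter_facts {p : G → G → ℝ} (hnn : ∀ ξ η, 0 ≤ p ξ η) (hrow : ∀ ξ, HasSum (p ξ) 1)
    (n : ℕ) (η : G) : (∀ ξ, 0 ≤ kiter p n η ξ) ∧ HasSum (kiter p n η) 1 := by
  induction n with
  | zero =>
    constructor
    · intro ξ; simp only [kiter]; positivity
    · have : HasSum (fun ξ : G => if ξ = η then (1:ℝ) else 0) 1 := hasSum_ite_eq η 1
      refine this.congr_fun fun ξ => ?_
      simp only [kiter, eq_comm]
  | succ n ih =>
    obtain ⟨hnn', hrow'⟩ := ih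
    have hf : ∀ q : G × G, 0 ≤ kiter p n η q.1 * p q.1 q.2 :=
      fun q => mul_nonneg (hnn' _) (hnn _ _)
    have hs : Summable (fun q : G × G => kiter p n η q.1 * p q.1 q.2) := by
      have h1 : ∀ ζ : G, Summable fun y : G => kiter p n η ζ * p ζ y :=
        fun ζ => (hrow ζ).summable.mul_left _
      have h2 : Summable fun ζ : G => ∑' y : G, kiter p n η ζ * p ζ y := by
        have he : (fun ζ : G => ∑' ξ, kiter p n η ζ * p ζ ξ) = fun ζ => kiter p n η ζ := by
          funext ζ; rw [tsum_mul_left, (hrow ζ).tsum_eq, mul_one]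
        rw [he]; exact hrow'.summable
      exact (summable_prod_of_nonneg hf).mpr ⟨h1, h2⟩
    have hnn1 : ∀ ξ, 0 ≤ kiter p (n+1) η ξ := by
      intro ξ; simp only [kiter]
      exact tsum_nonneg fun ζ => mul_nonneg (hnn' _) (hnn _ _)
    refine ⟨hnn1, ?_⟩
    have hs2 : Summable (fun q : G × G => kiter p n η q.2 * p q.2 q.1) :=
      hs.comp_injective (Equiv.prodComm G G).injective
    have hrowsum : Summable (fun ξ : G => ∑' ζ : G, kiter p n η ζ * p ζ ξ) := by
      have := ((summable_prod_of_nonneg (f := fun q : G × G => kiter p n η q.2 * p q.2 q.1)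
        (fun q => hf q.swap)).mp hs2).2
      exact this
    have hmid : ∑' (q : G × G), kiter p n η q.2 * p q.2 q.1
        = ∑' (q : G × G), kiter p n η q.1 * p q.1 q.2 :=
      (Equiv.prodComm G G).tsum_eq (fun q : G × G => kiter p n η q.1 * p q.1 q.2)
    have ht : ∑' ξ : G, ∑' ζ : G, kiter p n η ζ * p ζ ξ = 1 := by
      rw [← Summable.tsum_prod' hs2 hs2.prod_factor, hmid, Summable.tsum_prod' hs hs.prod_factor]
      calc ∑' ζ : G, ∑' ξ : G, kiter p n η ζ * p ζ ξ = ∑' ζ : G, kiter p n η ζ := by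
            congr 1; funext ζ; rw [tsum_mul_left, (hrow ζ).tsum_eq, mul_one]
        _ = 1 := hrow'.tsum_eq
    have := hrowsum.hasSum
    rw [ht] at this
    exact this.congr_fun fun ξ => by simp only [kiter]

lemma kiter_le_one {p : G → G → ℝ} (hnn : ∀ ξ η, 0 ≤ p ξ η) (hrow : ∀ ξ, HasSum (p ξ) 1)
    (n : ℕ) (η ξ : G) : kiter p n η ξ ≤ 1 :=
  le_hasSum (kiter_facts hnn hrow n η).2 ξ fun j _ => (kiter_facts hnn hrow n η).1 j

-- LSweight lemmas
variable {R : ℝ} {β : G → ℝ}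

lemma lsgeom_pos (hR : 2 < R) : 0 < 2 / R := by positivity
lemma lsgeom_lt (hR : 2 < R) : 2 / R < 1 := by
  rw [div_lt_one (by linarith)]; linarith

lemma inv_pow_eq (hR : 2 < R) (n : ℕ) : ((R / 2) ^ n)⁻¹ = (2 / R) ^ n := by
  rw [← inv_pow]; congr 1; rw [inv_div]

lemma ls_term_nonneg (hk : IsRWKernel a) (hR : 2 < R) (hβ : ∀ η, 0 < β η) (η ξ : G) (n : ℕ) :
    0 ≤ ((R / 2) ^ n)⁻¹ * kiter (ahat a) n η ξ * β η := by
  have h1 := (kiter_facts (ahat_nonneg hk) (ahat_row hk) n η).1 ξ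
  have h2 := (hβ η).le
  have h3 : (0:ℝ) < R / 2 := by linarith
  positivity

lemma ls_inner_summable (hk : IsRWKernel a) (hR : 2 < R) (hβ : ∀ η, 0 < β η) (η ξ : G) :
    Summable (fun n : ℕ => ((R / 2) ^ n)⁻¹ * kiter (ahat a) n η ξ * β η) := by
  refine Summable.of_nonneg_of_le (ls_term_nonneg hk hR hβ η ξ) (fun n => ?_)
    (((summable_geometric_of_lt_one (lsgeom_pos hR).le (lsgeom_lt hR))).mul_right (β η))
  rw [inv_pow_eq hR]
  have h1 := (kiter_facts (ahat_nonneg hk) (ahat_row hk) n η).1 ξ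
  have h2 := kiter_le_one (ahat_nonneg hk) (ahat_row hk) n η ξ
  have h3 : (0:ℝ) ≤ (2/R)^n := (pow_nonneg (lsgeom_pos hR).le n)
  calc (2/R)^n * kiter (ahat a) n η ξ * β η ≤ (2/R)^n * 1 * β η := by
        apply mul_le_mul_of_nonneg_right _ (hβ η).le
        exact mul_le_mul_of_nonneg_left h2 h3
    _ = (2/R)^n * β η := by ring

lemma ls_inner_le (hk : IsRWKernel a) (hR : 2 < R) (hβ : ∀ η, 0 < β η) (η ξ : G) :
    ∑' n : ℕ, ((R / 2) ^ n)⁻¹ * kiter (ahat a) n η ξ * β η ≤ (1 - 2/R)⁻¹ * β η := by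
  have hg : HasSum (fun n : ℕ => (2/R)^n * β η) ((1 - 2/R)⁻¹ * β η) :=
    (hasSum_geometric_of_lt_one (lsgeom_pos hR).le (lsgeom_lt hR)).mul_right (β η)
  refine le_trans (Summable.tsum_le_tsum (fun n => ?_) (ls_inner_summable hk hR hβ η ξ) hg.summable) ?_
  · rw [inv_pow_eq hR]
    have h2 := kiter_le_one (ahat_nonneg hk) (ahat_row hk) n η ξ
    have h1 := (kiter_facts (ahat_nonneg hk) (ahat_row hk) n η).1 ξ
    have h3 : (0:ℝ) ≤ (2/R)^n := (pow_nonneg (lsgeom_pos hR).le n)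
    calc (2/R)^n * kiter (ahat a) n η ξ * β η ≤ (2/R)^n * 1 * β η := by
          apply mul_le_mul_of_nonneg_right _ (hβ η).le
          exact mul_le_mul_of_nonneg_left h2 h3
      _ = (2/R)^n * β η := by ring
  · exact hg.tsum_eq.le

lemma ls_outer_summable (hk : IsRWKernel a) (hR : 2 < R) (hβ : ∀ η, 0 < β η)
    (hβs : Summable β) (ξ : G) :
    Summable (fun η => ∑' n : ℕ, ((R / 2) ^ n)⁻¹ * kiter (ahat a) n η ξ * β η) := by
  refine Summable.of_nonneg_of_le (fun η => tsum_nonneg (ls_term_nonneg hk hR hβ η ξ))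
    (fun η => ls_inner_le hk hR hβ η ξ) (hβs.mul_left _)

lemma LSweight_nonneg (hk : IsRWKernel a) (hR : 2 < R) (hβ : ∀ η, 0 < β η) (ξ : G) :
    0 ≤ LSweight a R β ξ :=
  tsum_nonneg fun η => tsum_nonneg (ls_term_nonneg hk hR hβ η ξ)

lemma a_le_LS (hk : IsRWKernel a) (hR : 2 < R) (hβ : ∀ η, 0 < β η) (hβs : Summable β)
    (ξ η : G) : a η ξ ≤ (R / β ξ) * LSweight a R β η := by
  have hR0 : (0:ℝ) < R := by linarith
  have h1 : kiter (ahat a) 1 ξ η = ahat a ξ η := by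
    show (∑' ζ : G, kiter (ahat a) 0 ξ ζ * ahat a ζ η) = ahat a ξ η
    rw [tsum_eq_single ξ]
    · simp [kiter]
    · intro ζ hζ; simp [kiter, Ne.symm hζ]
  have h2 : (2/R) * ahat a ξ η * β ξ ≤ ∑' n : ℕ, ((R / 2) ^ n)⁻¹ * kiter (ahat a) n ξ η * β ξ := by
    have := Summable.le_tsum (ls_inner_summable hk hR hβ ξ η) 1
      (fun n _ => ls_term_nonneg hk hR hβ ξ η n)
    rw [inv_pow_eq hR, pow_one, h1] at this
    exact this
  have h3 : ∑' n : ℕ, ((R / 2) ^ n)⁻¹ * kiter (ahat a) n ξ η * β ξ ≤ LSweight a R β η :=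
    Summable.le_tsum (ls_outer_summable hk hR hβ hβs η) ξ
      (fun η' _ => tsum_nonneg (ls_term_nonneg hk hR hβ η' η))
  have h4 : a η ξ / 2 ≤ ahat a ξ η := by
    have := hk.nonneg ξ η; unfold ahat; linarith
  have h5 : a η ξ * β ξ / R ≤ LSweight a R β η := by
    have hb := (hβ ξ).le
    calc a η ξ * β ξ / R = (2/R) * (a η ξ / 2) * β ξ := by field_simp
      _ ≤ (2/R) * ahat a ξ η * β ξ := by
          apply mul_le_mul_of_nonneg_right _ hb
          exact mul_le_mul_of_nonneg_left h4 (lsgeom_pos hR).le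
      _ ≤ LSweight a R β η := le_trans h2 h3
  rw [div_le_iff₀ hR0] at h5
  rw [div_mul_eq_mul_div, le_div_iff₀ (hβ ξ)]
  linarith

end PartI

section PartII
variable {G : Type} [AddCommGroup G] [Countable G] {M : ℕ}

/-- sum S(α,y) := ∑' ζ, α ζ * xbar y ζ is really a finite sum -/
lemma S_summable (α : G → ℝ) (hα : (Function.support α).Finite) (y : G → Fin M → ℝ) :
    Summable (fun ζ => α ζ * xbar y ζ) := by
  apply summable_of_ne_finset_zero (s := hα.toFinset)
  intro ζ hζ
  have : α ζ = 0 := by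
    by_contra h
    exact hζ (hα.mem_toFinset.mpr h)
  simp [this]

lemma xbar_shift (y : G → Fin M → ℝ) (t : ℝ) (m : Fin M) (ξ ζ : G) :
    xbar (y + t • evec m ξ) ζ = xbar y ζ + if ζ = ξ then t else 0 := by
  unfold xbar evec
  simp only [Pi.add_apply, Pi.smul_apply, smul_eq_mul]
  rw [Finset.sum_add_distrib]
  congr 1
  by_cases h : ζ = ξ
  · subst h
    rw [Finset.sum_eq_single m]
    · simp
    · intro n _ hn; simp [hn]
    · simp
  · simp [h]

lemma S_shift (α : G → ℝ) (hα : (Function.support α).Finite) (y : G → Fin M → ℝ)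
    (t : ℝ) (m : Fin M) (ξ : G) :
    ∑' ζ : G, α ζ * xbar (y + t • evec m ξ) ζ = (∑' ζ : G, α ζ * xbar y ζ) + t * α ξ := by
  have h1 : ∀ ζ, α ζ * xbar (y + t • evec m ξ) ζ
      = α ζ * xbar y ζ + (if ζ = ξ then α ξ * t else 0) := by
    intro ζ
    rw [xbar_shift]
    by_cases h : ζ = ξ
    · subst h; simp [mul_add, mul_comm]
    · simp [h]
  rw [tsum_congr h1, Summable.tsum_add (S_summable α hα y)
    (summable_of_ne_finset_zero (s := {ξ}) (by intro b hb; simp at hb; simp [hb])),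
    tsum_ite_eq ξ (fun _ => α ξ * t)]
  ring

/-- the finprod in Hdual as a finite product over pairs -/
lemma prod_form (κ' : G → Fin M → ℕ) (s : Finset G) (hs : Function.support κ' ⊆ s)
    (y : G → Fin M → ℝ) :
    ∏ᶠ ζ : G, ∏ n : Fin M, y ζ n ^ κ' ζ n
      = ∏ p ∈ s ×ˢ (Finset.univ : Finset (Fin M)), y p.1 p.2 ^ κ' p.1 p.2 := by
  rw [Finset.prod_product]
  apply finprod_eq_prod_of_mulSupport_subset
  intro ζ hζ
  by_contra h
  have h0 : κ' ζ = 0 := by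
    by_contra h0
    exact h (hs h0)
  apply hζ
  simp [h0]

lemma Hdual_eq (α : G → ℝ) (κ' : G → Fin M → ℕ) (s : Finset G)
    (hs : Function.support κ' ⊆ s) (y : G → Fin M → ℝ) :
    Hdual α κ' y = Real.exp (-(∑' ζ : G, α ζ * xbar y ζ)) *
      ∏ p ∈ s ×ˢ (Finset.univ : Finset (Fin M)), y p.1 p.2 ^ κ' p.1 p.2 := by
  unfold Hdual
  rw [prod_form κ' s hs]

lemma prod_split (κ' : G → Fin M → ℕ) (s : Finset G) (hξ : ξ ∈ s) (m : Fin M)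
    (y : G → Fin M → ℝ) :
    ∏ p ∈ s ×ˢ (Finset.univ : Finset (Fin M)), y p.1 p.2 ^ κ' p.1 p.2
      = y ξ m ^ κ' ξ m *
        ∏ p ∈ (s ×ˢ (Finset.univ : Finset (Fin M))).erase (ξ, m), y p.1 p.2 ^ κ' p.1 p.2 := by
  exact (Finset.mul_prod_erase (s ×ˢ Finset.univ)
    (fun p => y p.1 p.2 ^ κ' p.1 p.2) (by simp [hξ] : ((ξ, m) : G × Fin M) ∈ _)).symm

lemma prod_shift (κ' : G → Fin M → ℕ) (s : Finset G) (hξ : ξ ∈ s) (m : Fin M)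
    (t : ℝ) (y : G → Fin M → ℝ) :
    ∏ p ∈ s ×ˢ (Finset.univ : Finset (Fin M)), (y + t • evec m ξ) p.1 p.2 ^ κ' p.1 p.2
      = (y ξ m + t) ^ κ' ξ m *
        ∏ p ∈ (s ×ˢ (Finset.univ : Finset (Fin M))).erase (ξ, m), y p.1 p.2 ^ κ' p.1 p.2 := by
  rw [← Finset.mul_prod_erase (s ×ˢ Finset.univ)
    (fun p => (y + t • evec m ξ) p.1 p.2 ^ κ' p.1 p.2) (by simp [hξ] : ((ξ, m) : G × Fin M) ∈ _)]
  congr 1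
  · simp [evec]
  · apply Finset.prod_congr rfl
    intro p hp
    have hne : p ≠ (ξ, m) := Finset.ne_of_mem_erase hp
    have : (y + t • evec m ξ) p.1 p.2 = y p.1 p.2 := by
      simp only [Pi.add_apply, Pi.smul_apply, smul_eq_mul, evec]
      have : ¬(p.1 = ξ ∧ p.2 = m) := by
        intro ⟨h1, h2⟩; exact hne (Prod.ext h1 h2)
      simp [this]
    rw [this]

variable {ξ : G}

lemma supp_sub_e (κ' : G → Fin M → ℕ) (hκ' : (Function.support κ').Finite) (m : Fin M) (ξ : G) :
    (Function.support (fun η n => κ' η n - ekap m ξ η n)).Finite := by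
  apply hκ'.subset
  intro η hη
  by_contra h
  have h0 : κ' η = 0 := Function.notMem_support.mp h
  apply hη
  funext n
  simp [ekap, congrFun h0 n]

lemma supp_add_e (κ' : G → Fin M → ℕ) (hκ' : (Function.support κ').Finite) (m : Fin M) (ξ : G) :
    (Function.support (fun η n => κ' η n + ekap m ξ η n)).Finite := by
  apply (hκ'.union (Set.finite_singleton ξ)).subset
  intro η hη
  by_cases h2 : η = ξ
  · exact Or.inr h2
  · left
    by_contra h1
    have h0 : κ' η = 0 := Function.notMem_support.mp h1
    apply hη
    funext n
    simp [ekap, congrFun h0 n, h2]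

lemma hasDerivAt_Hdual_x (α : G → ℝ) (hα : (Function.support α).Finite)
    (κ' : G → Fin M → ℕ) (hκ' : (Function.support κ').Finite)
    (m : Fin M) (ξ : G) (y : G → Fin M → ℝ) :
    HasDerivAt (fun t : ℝ => Hdual α κ' (y + t • evec m ξ))
      (-α ξ * Hdual α κ' y
        + (κ' ξ m : ℝ) * Hdual α (fun η n => κ' η n - ekap m ξ η n) y) 0 := by
  classical
  set s := hκ'.toFinset ∪ {ξ} with hs_def
  have hs : Function.support κ' ⊆ (s : Set G) := by
    intro ζ hζ
    simp only [hs_def, Finset.coe_union, Set.mem_union, Finset.coe_singleton]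
    exact Or.inl (hκ'.mem_toFinset.mpr hζ)
  have hξs : ξ ∈ s := Finset.mem_union_right _ (Finset.mem_singleton_self ξ)
  set S := ∑' ζ : G, α ζ * xbar y ζ with hS
  set Q := ∏ p ∈ (s ×ˢ (Finset.univ : Finset (Fin M))).erase (ξ, m), y p.1 p.2 ^ κ' p.1 p.2
    with hQ
  set k := κ' ξ m with hk
  have hfun : (fun t : ℝ => Hdual α κ' (y + t • evec m ξ))
      = fun t => Real.exp (-(S + t * α ξ)) * (y ξ m + t) ^ k * Q := by
    funext t
    rw [Hdual_eq α κ' s hs, S_shift α hα y t m ξ, prod_shift κ' s hξs m t y, mul_assoc]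
  have hd1 : HasDerivAt (fun t : ℝ => -(S + t * α ξ)) (-α ξ) 0 := by
    have h := ((hasDerivAt_id (0:ℝ)).mul_const (α ξ)).const_add S
    simpa using h.fun_neg
  have hd2 : HasDerivAt (fun t : ℝ => Real.exp (-(S + t * α ξ)))
      (Real.exp (-(S + 0 * α ξ)) * (-α ξ)) 0 := hd1.exp
  have hd3 : HasDerivAt (fun t : ℝ => (y ξ m + t) ^ k)
      ((k : ℝ) * (y ξ m + 0) ^ (k - 1) * 1) 0 :=
    ((hasDerivAt_id (0:ℝ)).const_add (y ξ m)).pow k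
  have hd4 := (hd2.mul hd3).mul_const Q
  rw [hfun]
  refine hd4.congr_deriv ?_
  have hH : Hdual α κ' y = Real.exp (-S) * (y ξ m ^ k * Q) := by
    rw [Hdual_eq α κ' s hs y, prod_split κ' s hξs m y]
  have hs2 : Function.support (fun η n => κ' η n - ekap m ξ η n) ⊆ (s : Set G) := by
    intro ζ hζ
    apply hs
    by_contra h
    have h0 : κ' ζ = 0 := Function.notMem_support.mp h
    apply hζ
    funext n
    simp [congrFun h0 n]
  have hQ2 : ∏ p ∈ (s ×ˢ (Finset.univ : Finset (Fin M))).erase (ξ, m),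
      y p.1 p.2 ^ (κ' p.1 p.2 - ekap m ξ p.1 p.2) = Q := by
    rw [hQ]
    apply Finset.prod_congr rfl
    intro p hp
    have hne : p ≠ (ξ, m) := Finset.ne_of_mem_erase hp
    have : ekap m ξ p.1 p.2 = 0 := by
      have : ¬(p.1 = ξ ∧ p.2 = m) := by
        intro ⟨h1, h2⟩; exact hne (Prod.ext h1 h2)
      simp [ekap, this]
    rw [this, Nat.sub_zero]
  have hH2 : Hdual α (fun η n => κ' η n - ekap m ξ η n) y
      = Real.exp (-S) * (y ξ m ^ (k - 1) * Q) := by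
    rw [Hdual_eq α (fun η n => κ' η n - ekap m ξ η n) s hs2 y,
      prod_split (fun η n => κ' η n - ekap m ξ η n) s hξs m y]
    have he : ekap m ξ ξ m = 1 := by simp [ekap]
    rw [he, hQ2]
  rw [hH, hH2]
  simp only [zero_mul, add_zero, mul_one]
  ring

lemma pderiv_Hdual (α : G → ℝ) (hα : (Function.support α).Finite)
    (κ' : G → Fin M → ℕ) (hκ' : (Function.support κ').Finite)
    (m : Fin M) (ξ : G) (y : G → Fin M → ℝ) :
    pderiv m ξ (fun z => Hdual α κ' z) y
      = -α ξ * Hdual α κ' y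
        + (κ' ξ m : ℝ) * Hdual α (fun η n => κ' η n - ekap m ξ η n) y :=
  (hasDerivAt_Hdual_x α hα κ' hκ' m ξ y).deriv

lemma pderiv2_Hdual (α : G → ℝ) (hα : (Function.support α).Finite)
    (κ' : G → Fin M → ℕ) (hκ' : (Function.support κ').Finite)
    (m : Fin M) (ξ : G) (y : G → Fin M → ℝ) :
    pderiv m ξ (pderiv m ξ (fun z => Hdual α κ' z)) y
      = α ξ ^ 2 * Hdual α κ' y
        - 2 * α ξ * (κ' ξ m : ℝ) * Hdual α (fun η n => κ' η n - ekap m ξ η n) y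
        + (κ' ξ m : ℝ) * ((κ' ξ m - 1 : ℕ) : ℝ) *
          Hdual α (fun η n => κ' η n - ekap m ξ η n - ekap m ξ η n) y := by
  have hfun : pderiv m ξ (fun z => Hdual α κ' z)
      = fun z => -α ξ * Hdual α κ' z
        + (κ' ξ m : ℝ) * Hdual α (fun η n => κ' η n - ekap m ξ η n) z := by
    funext z
    exact pderiv_Hdual α hα κ' hκ' m ξ z
  rw [hfun]
  unfold pderiv
  have hd1 := (hasDerivAt_Hdual_x α hα κ' hκ' m ξ y).const_mul (-α ξ)
  have hd2 := (hasDerivAt_Hdual_x α hα (fun η n => κ' η n - ekap m ξ η n)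
    (supp_sub_e κ' hκ' m ξ) m ξ y).const_mul ((κ' ξ m : ℝ))
  have hd := hd1.fun_add hd2
  rw [hd.deriv]
  have he : κ' ξ m - ekap m ξ ξ m = κ' ξ m - 1 := by simp [ekap]
  rw [he]
  ring

lemma S_shift_alpha (α : G → ℝ) (hα : (Function.support α).Finite)
    (x : G → Fin M → ℝ) (t : ℝ) (ξ : G) :
    ∑' ζ : G, (α + t • e1 ξ) ζ * xbar x ζ
      = (∑' ζ : G, α ζ * xbar x ζ) + t * xbar x ξ := by
  have h1 : ∀ ζ, (α + t • e1 ξ) ζ * xbar x ζ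
      = α ζ * xbar x ζ + (if ζ = ξ then t * xbar x ξ else 0) := by
    intro ζ
    simp only [Pi.add_apply, Pi.smul_apply, smul_eq_mul, e1]
    by_cases h : ζ = ξ
    · subst h; simp; ring
    · simp [h]
  rw [tsum_congr h1, Summable.tsum_add (S_summable α hα x)
    (summable_of_ne_finset_zero (s := {ξ}) (by intro b hb; simp at hb; simp [hb])),
    tsum_ite_eq ξ (fun _ => t * xbar x ξ)]

lemma hasDerivAt_Hdual_alpha (α : G → ℝ) (hα : (Function.support α).Finite)
    (κ' : G → Fin M → ℕ) (ξ : G) (x : G → Fin M → ℝ) :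
    HasDerivAt (fun t : ℝ => Hdual (α + t • e1 ξ) κ' x)
      (-xbar x ξ * Hdual α κ' x) 0 := by
  set S := ∑' ζ : G, α ζ * xbar x ζ with hS
  set P := ∏ᶠ ζ : G, ∏ n : Fin M, x ζ n ^ κ' ζ n with hP
  have hfun : (fun t : ℝ => Hdual (α + t • e1 ξ) κ' x)
      = fun t => Real.exp (-(S + t * xbar x ξ)) * P := by
    funext t
    unfold Hdual
    rw [S_shift_alpha α hα x t ξ]
  have hd1 : HasDerivAt (fun t : ℝ => -(S + t * xbar x ξ)) (-xbar x ξ) 0 := by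
    have h := ((hasDerivAt_id (0:ℝ)).mul_const (xbar x ξ)).const_add S
    simpa using h.fun_neg
  have hd2 := hd1.exp.mul_const P
  rw [hfun]
  refine hd2.congr_deriv ?_
  unfold Hdual
  rw [← hS, ← hP]
  simp only [zero_mul, add_zero]
  ring

lemma aderiv_Hdual (α : G → ℝ) (hα : (Function.support α).Finite)
    (κ' : G → Fin M → ℕ) (ξ : G) (x : G → Fin M → ℝ) :
    aderiv ξ (fun p : (G → ℝ) × (G → Fin M → ℕ) => Hdual p.1 p.2 x) (α, κ')
      = -xbar x ξ * Hdual α κ' x :=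
  (hasDerivAt_Hdual_alpha α hα κ' ξ x).deriv

lemma supp_add_e1 (α : G → ℝ) (hα : (Function.support α).Finite) (t : ℝ) (ξ : G) :
    (Function.support (α + t • e1 ξ)).Finite := by
  apply (hα.union (Set.finite_singleton ξ)).subset
  intro η hη
  by_cases h2 : η = ξ
  · exact Or.inr h2
  · left
    by_contra h1
    apply hη
    simp [Function.notMem_support.mp h1, e1, h2]

lemma aderiv2_Hdual (α : G → ℝ) (hα : (Function.support α).Finite)
    (κ' : G → Fin M → ℕ) (ξ : G) (x : G → Fin M → ℝ) :
    aderiv ξ (aderiv ξ (fun p : (G → ℝ) × (G → Fin M → ℕ) => Hdual p.1 p.2 x)) (α, κ')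
      = xbar x ξ ^ 2 * Hdual α κ' x := by
  have hrfl : aderiv ξ (aderiv ξ (fun p : (G → ℝ) × (G → Fin M → ℕ) => Hdual p.1 p.2 x)) (α, κ')
      = deriv (fun t : ℝ => aderiv ξ
          (fun p : (G → ℝ) × (G → Fin M → ℕ) => Hdual p.1 p.2 x) (α + t • e1 ξ, κ')) 0 := rfl
  have hfun : (fun t : ℝ => aderiv ξ
        (fun p : (G → ℝ) × (G → Fin M → ℕ) => Hdual p.1 p.2 x) (α + t • e1 ξ, κ'))
      = fun t => -xbar x ξ * Hdual (α + t • e1 ξ) κ' x := by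
    funext t
    exact aderiv_Hdual (α + t • e1 ξ) (supp_add_e1 α hα t ξ) κ' ξ x
  rw [hrfl, hfun]
  have hd := (hasDerivAt_Hdual_alpha α hα κ' ξ x).const_mul (-xbar x ξ)
  rw [hd.deriv]
  ring

lemma Hdual_incr (α : G → ℝ) (κ' : G → Fin M → ℕ) (hκ' : (Function.support κ').Finite)
    (m : Fin M) (ξ : G) (x : G → Fin M → ℝ) :
    Hdual α (fun η n => κ' η n + ekap m ξ η n) x = x ξ m * Hdual α κ' x := by
  classical
  set s := hκ'.toFinset ∪ {ξ} with hs_def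
  have hs : Function.support κ' ⊆ (s : Set G) := by
    intro ζ hζ
    simp only [hs_def, Finset.coe_union, Set.mem_union, Finset.coe_singleton]
    exact Or.inl (hκ'.mem_toFinset.mpr hζ)
  have hξs : ξ ∈ s := Finset.mem_union_right _ (Finset.mem_singleton_self ξ)
  have hs2 : Function.support (fun η n => κ' η n + ekap m ξ η n) ⊆ (s : Set G) := by
    intro ζ hζ
    by_cases h : ζ = ξ
    · subst h; exact hξs
    · apply hs
      by_contra h0
      apply hζ
      funext n
      simp [congrFun (Function.notMem_support.mp h0) n, ekap, h]
  rw [Hdual_eq α (fun η n => κ' η n + ekap m ξ η n) s hs2 x,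
    prod_split (fun η n => κ' η n + ekap m ξ η n) s hξs m x,
    Hdual_eq α κ' s hs x, prod_split κ' s hξs m x]
  have hQ2 : ∏ p ∈ (s ×ˢ (Finset.univ : Finset (Fin M))).erase (ξ, m),
      x p.1 p.2 ^ (κ' p.1 p.2 + ekap m ξ p.1 p.2)
      = ∏ p ∈ (s ×ˢ (Finset.univ : Finset (Fin M))).erase (ξ, m), x p.1 p.2 ^ κ' p.1 p.2 := by
    apply Finset.prod_congr rfl
    intro p hp
    have hne : p ≠ (ξ, m) := Finset.ne_of_mem_erase hp
    have : ¬(p.1 = ξ ∧ p.2 = m) := by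
      intro ⟨h1, h2⟩; exact hne (Prod.ext h1 h2)
    simp [ekap, this]
  rw [hQ2]
  have he : ekap m ξ ξ m = 1 := by simp [ekap]
  rw [he, pow_succ]
  ring

lemma Hdual_decr (α : G → ℝ) (κ' : G → Fin M → ℕ) (hκ' : (Function.support κ').Finite)
    (m : Fin M) (ξ : G) (x : G → Fin M → ℝ) (hm : 1 ≤ κ' ξ m) :
    Hdual α κ' x = x ξ m * Hdual α (fun η n => κ' η n - ekap m ξ η n) x := by
  have h := Hdual_incr α (fun η n => κ' η n - ekap m ξ η n) (supp_sub_e κ' hκ' m ξ) m ξ x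
  have he : (fun η n => (κ' η n - ekap m ξ η n) + ekap m ξ η n) = κ' := by
    funext η n
    by_cases hc : η = ξ ∧ n = m
    · obtain ⟨h1, h2⟩ := hc; subst h1; subst h2
      simp only [ekap, and_self, if_true]
      omega
    · simp [ekap, hc]
  rw [he] at h
  rw [h]

end PartII

theorem duality_generator_identity
    {G : Type} [AddCommGroup G] [Countable G]
    (a : G → G → ℝ) (R : ℝ) (β : G → ℝ) (hLS : IsLSData a R β)
    (M : ℕ) (γ K lam : ℝ) (hγ : 0 < γ) (hK : 0 < K) (hlam : 0 < lam)
    (x : G → Fin M → ℝ) (hx : x ∈ stateE (LSweight a R β) M)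
    (α : G → ℝ) (hαfin : (Function.support α).Finite) (hαpos : ∀ ξ, 0 ≤ α ξ)
    (κ : G → Fin M → ℕ) (hκfin : (Function.support κ).Finite) :
    -- all series converge absolutely:
    (∀ (m : Fin M) (ξ : G), Summable (fun η : G => |a η ξ * (x η m - x ξ m)|)) ∧
    Summable (fun q : Fin M × G =>
      |((∑' η : G, a η q.2 * (x η q.1 - x q.2 q.1))
        + γ * x q.2 q.1 * (K - ∑ n, lam * x q.2 n))
        * pderiv q.1 q.2 (fun y => Hdual α κ y) x|) ∧
    Summable (fun q : Fin M × G =>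
      |γ * x q.2 q.1 *
        pderiv q.1 q.2 (pderiv q.1 q.2 fun y => Hdual α κ y) x|) ∧
    Summable (fun q : Fin M × G × G => |(κ q.2.1 q.1 : ℝ) * a q.2.2 q.2.1 *
      (Hdual α (fun η n => κ η n + ekap q.1 q.2.2 η n - ekap q.1 q.2.1 η n) x
        - Hdual α κ x)|) ∧
    Summable (fun q : Fin M × G => |((κ q.2 q.1 : ℝ) * ((κ q.2 q.1 : ℝ) - 1) / 2) *
      (Hdual α (fun η n => κ η n - ekap q.1 q.2 η n) x - Hdual α κ x)|) ∧
    Summable (fun q : G × G => |a q.1 q.2 * (α q.2 - α q.1) *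
      aderiv q.1 (fun p => Hdual p.1 p.2 x) (α, κ)|) ∧
    Summable (fun ξ : G => |α ξ * (K - α ξ / 2) *
      aderiv ξ (fun p => Hdual p.1 p.2 x) (α, κ)|) ∧
    Summable (fun ξ : G => |α ξ *
      aderiv ξ (aderiv ξ fun p => Hdual p.1 p.2 x) (α, κ)|) ∧
    Summable (fun ξ : G => |(kapbar κ ξ : ℝ) *
      aderiv ξ (fun p => Hdual p.1 p.2 x) (α, κ)|) ∧
    Summable (fun ξ : G => |(∑ m, (κ ξ m : ℝ) * ((κ ξ m : ℝ) - 1) / 2)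
      - α ξ * (kapbar κ ξ : ℝ) + K * (kapbar κ ξ : ℝ)|) ∧
    -- and the generator identity holds:
    diffGen a (fun _ => γ) (fun _ => K) (fun _ _ => lam)
        (fun y => Hdual α κ y) x
      = dualGen a γ K lam (fun p => Hdual p.1 p.2 x) (α, κ)
        + betaDual γ K α κ * Hdual α κ x := by
  classical
  obtain ⟨hk, hR, hβp, hβs⟩ := hLS
  obtain ⟨hxnn, hxs⟩ := hx
  -- basic facts
  have hxbnn : ∀ ξ, 0 ≤ xbar x ξ := fun ξ => Finset.sum_nonneg fun m _ => hxnn ξ m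
  have hxm_le : ∀ ξ m, x ξ m ≤ xbar x ξ := fun ξ m =>
    Finset.single_le_sum (fun n _ => hxnn ξ n) (Finset.mem_univ m)
  have hacol : ∀ ξ : G, Summable (fun η => a η ξ) := fun ξ => (rw_col hk ξ).summable
  have harow : ∀ ξ : G, Summable (fun η => a ξ η) := fun ξ => (rw_row hk ξ).summable
  have hax : ∀ ξ : G, Summable (fun η => a η ξ * xbar x η) := by
    intro ξ
    refine Summable.of_nonneg_of_le (fun η => mul_nonneg (hk.nonneg η ξ) (hxbnn η)) (fun η => ?_)
      (hxs.mul_left (R / β ξ))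
    calc a η ξ * xbar x η ≤ ((R / β ξ) * LSweight a R β η) * xbar x η :=
          mul_le_mul_of_nonneg_right (a_le_LS hk hR hβp hβs ξ η) (hxbnn η)
      _ = R / β ξ * (LSweight a R β η * xbar x η) := by ring
  have haxm : ∀ (m : Fin M) (ξ : G), Summable (fun η => a η ξ * x η m) := by
    intro m ξ
    refine Summable.of_nonneg_of_le (fun η => mul_nonneg (hk.nonneg η ξ) (hxnn η m))
      (fun η => mul_le_mul_of_nonneg_left (hxm_le η m) (hk.nonneg η ξ)) (hax ξ)
  set F : Finset G := hαfin.toFinset ∪ hκfin.toFinset with hF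
  have hαF : ∀ ξ, ξ ∉ F → α ξ = 0 := by
    intro ξ hξ
    by_contra h
    exact hξ (Finset.mem_union_left _ (hαfin.mem_toFinset.mpr h))
  have hκF : ∀ ξ, ξ ∉ F → κ ξ = 0 := by
    intro ξ hξ
    by_contra h
    exact hξ (Finset.mem_union_right _ (hκfin.mem_toFinset.mpr h))
  have hκFm : ∀ ξ, ξ ∉ F → ∀ m, κ ξ m = 0 := fun ξ hξ m => congrFun (hκF ξ hξ) m
  have hkapF : ∀ ξ, ξ ∉ F → kapbar κ ξ = 0 := by
    intro ξ hξ
    unfold kapbar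
    exact Finset.sum_eq_zero fun m _ => hκFm ξ hξ m
  -- abbreviations
  set H0 := Hdual α κ x with hH0
  have hpd : ∀ (m : Fin M) (ξ : G) (y : G → Fin M → ℝ),
      pderiv m ξ (fun y => Hdual α κ y) y
        = -α ξ * Hdual α κ y
          + (κ ξ m : ℝ) * Hdual α (fun η n => κ η n - ekap m ξ η n) y :=
    fun m ξ y => pderiv_Hdual α hαfin κ hκfin m ξ y
  have hpd2 : ∀ (m : Fin M) (ξ : G),
      pderiv m ξ (pderiv m ξ (fun y => Hdual α κ y)) x
        = α ξ ^ 2 * Hdual α κ x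
          - 2 * α ξ * (κ ξ m : ℝ) * Hdual α (fun η n => κ η n - ekap m ξ η n) x
          + (κ ξ m : ℝ) * ((κ ξ m - 1 : ℕ) : ℝ) *
            Hdual α (fun η n => κ η n - ekap m ξ η n - ekap m ξ η n) x :=
    fun m ξ => pderiv2_Hdual α hαfin κ hκfin m ξ x
  have had : ∀ ξ : G, aderiv ξ (fun p : (G → ℝ) × (G → Fin M → ℕ) => Hdual p.1 p.2 x) (α, κ)
      = -xbar x ξ * H0 := fun ξ => aderiv_Hdual α hαfin κ ξ x
  have had2 : ∀ ξ : G,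
      aderiv ξ (aderiv ξ fun p : (G → ℝ) × (G → Fin M → ℕ) => Hdual p.1 p.2 x) (α, κ)
      = xbar x ξ ^ 2 * H0 := fun ξ => aderiv2_Hdual α hαfin κ ξ x
  -- the key exchange identity for the jump terms
  have key4 : ∀ (m : Fin M) (ξ η : G),
      (κ ξ m : ℝ) * (Hdual α (fun η' n => κ η' n + ekap m η η' n - ekap m ξ η' n) x
        - Hdual α κ x)
      = (κ ξ m : ℝ) * ((x η m - x ξ m) *
          Hdual α (fun η' n => κ η' n - ekap m ξ η' n) x) := by
    intro m ξ η
    rcases Nat.eq_zero_or_pos (κ ξ m) with h0 | hpos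
    · simp [h0]
    · have h1 : (fun η' n => κ η' n + ekap m η η' n - ekap m ξ η' n)
          = (fun η' n => (κ η' n - ekap m ξ η' n) + ekap m η η' n) := by
        funext η' n
        by_cases hc2 : η' = ξ ∧ n = m
        · obtain ⟨rfl, rfl⟩ := hc2
          simp only [ekap, and_self, if_true]
          split_ifs <;> omega
        · have : ekap m ξ η' n = 0 := by simp [ekap, hc2]
          simp [this]
      rw [h1, Hdual_incr α (fun η' n => κ η' n - ekap m ξ η' n) (supp_sub_e κ hκfin m ξ) m η x,
        Hdual_decr α κ hκfin m ξ x hpos]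
      ring
  -- claim 1
  have claim1 : ∀ (m : Fin M) (ξ : G), Summable (fun η : G => |a η ξ * (x η m - x ξ m)|) := by
    intro m ξ
    refine Summable.of_nonneg_of_le (fun η => abs_nonneg _) (fun η => ?_)
      ((haxm m ξ).add ((hacol ξ).mul_right (x ξ m)))
    rw [abs_mul, abs_of_nonneg (hk.nonneg η ξ)]
    have habs : |x η m - x ξ m| ≤ x η m + x ξ m := by
      rw [abs_le]
      constructor <;> [linarith [hxnn η m, hxnn ξ m]; linarith [hxnn η m, hxnn ξ m]]
    calc a η ξ * |x η m - x ξ m| ≤ a η ξ * (x η m + x ξ m) :=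
          mul_le_mul_of_nonneg_left habs (hk.nonneg η ξ)
      _ = a η ξ * x η m + a η ξ * x ξ m := by ring
  -- claim 2
  have claim2 : Summable (fun q : Fin M × G =>
      |((∑' η : G, a η q.2 * (x η q.1 - x q.2 q.1))
        + γ * x q.2 q.1 * (K - ∑ n, lam * x q.2 n))
        * pderiv q.1 q.2 (fun y => Hdual α κ y) x|) := by
    apply summable_of_ne_finset_zero (s := (Finset.univ : Finset (Fin M)) ×ˢ F)
    intro q hq
    have hq2 : q.2 ∉ F := by
      by_contra h
      exact hq (Finset.mem_product.mpr ⟨Finset.mem_univ _, h⟩)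
    rw [hpd q.1 q.2 x, hαF q.2 hq2, hκFm q.2 hq2 q.1]
    simp
  -- claim 3
  have claim3 : Summable (fun q : Fin M × G =>
      |γ * x q.2 q.1 * pderiv q.1 q.2 (pderiv q.1 q.2 fun y => Hdual α κ y) x|) := by
    apply summable_of_ne_finset_zero (s := (Finset.univ : Finset (Fin M)) ×ˢ F)
    intro q hq
    have hq2 : q.2 ∉ F := by
      by_contra h
      exact hq (Finset.mem_product.mpr ⟨Finset.mem_univ _, h⟩)
    rw [hpd2 q.1 q.2, hαF q.2 hq2, hκFm q.2 hq2 q.1]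
    simp
  -- claim 4
  have habs4 : ∀ (m : Fin M) (ξ η : G),
      |(κ ξ m : ℝ) * a η ξ *
        (Hdual α (fun η' n => κ η' n + ekap m η η' n - ekap m ξ η' n) x - Hdual α κ x)|
      = ((κ ξ m : ℝ) * |Hdual α (fun η' n => κ η' n - ekap m ξ η' n) x|)
        * |a η ξ * (x η m - x ξ m)| := by
    intro m ξ η
    have h1 : (κ ξ m : ℝ) * a η ξ *
        (Hdual α (fun η' n => κ η' n + ekap m η η' n - ekap m ξ η' n) x - Hdual α κ x)
        = a η ξ * ((κ ξ m : ℝ) *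
          (Hdual α (fun η' n => κ η' n + ekap m η η' n - ekap m ξ η' n) x - Hdual α κ x)) := by
      ring
    rw [h1, key4 m ξ η, abs_mul, abs_mul, abs_mul, abs_mul,
      abs_of_nonneg (hk.nonneg η ξ), Nat.abs_cast]
    ring
  have claim4 : Summable (fun q : Fin M × G × G => |(κ q.2.1 q.1 : ℝ) * a q.2.2 q.2.1 *
      (Hdual α (fun η n => κ η n + ekap q.1 q.2.2 η n - ekap q.1 q.2.1 η n) x
        - Hdual α κ x)|) := by
    have hnn : ∀ q : Fin M × G × G, (0:ℝ) ≤ |(κ q.2.1 q.1 : ℝ) * a q.2.2 q.2.1 *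
        (Hdual α (fun η n => κ η n + ekap q.1 q.2.2 η n - ekap q.1 q.2.1 η n) x
          - Hdual α κ x)| := fun q => abs_nonneg _
    refine (summable_prod_of_nonneg hnn).mpr ⟨fun m => ?_, ?_⟩
    · -- for each m, summable over G × G
      have hnn2 : ∀ p : G × G, (0:ℝ) ≤ |(κ p.1 m : ℝ) * a p.2 p.1 *
          (Hdual α (fun η n => κ η n + ekap m p.2 η n - ekap m p.1 η n) x
            - Hdual α κ x)| := fun p => abs_nonneg _
      refine (summable_prod_of_nonneg hnn2).mpr ⟨fun ξ => ?_, ?_⟩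
      · -- summable over η
        have := (claim1 m ξ).mul_left
          ((κ ξ m : ℝ) * |Hdual α (fun η' n => κ η' n - ekap m ξ η' n) x|)
        refine this.congr fun η => ?_
        rw [habs4 m ξ η]
      · -- summable over ξ of the inner sums
        apply summable_of_ne_finset_zero (s := F)
        intro ξ hξ
        have h0 : (κ ξ m : ℝ) = 0 := by rw [hκFm ξ hξ m]; simp
        simp [h0]
    · -- summable over Fin M
      exact (hasSum_fintype _).summable
  -- claim 5
  have claim5 : Summable (fun q : Fin M × G => |((κ q.2 q.1 : ℝ) * ((κ q.2 q.1 : ℝ) - 1) / 2) *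
      (Hdual α (fun η n => κ η n - ekap q.1 q.2 η n) x - Hdual α κ x)|) := by
    apply summable_of_ne_finset_zero (s := (Finset.univ : Finset (Fin M)) ×ˢ F)
    intro q hq
    have hq2 : q.2 ∉ F := by
      by_contra h
      exact hq (Finset.mem_product.mpr ⟨Finset.mem_univ _, h⟩)
    rw [hκFm q.2 hq2 q.1]
    simp
  -- claim 6 : the α-migration double series
  have habs1 : ∀ p : G × G, |a p.1 p.2 * α p.2 * (xbar x p.1 * H0)|
      = (α p.2 * |H0|) * (a p.1 p.2 * xbar x p.1) := by
    intro p
    rw [abs_mul, abs_mul, abs_mul, abs_of_nonneg (hk.nonneg p.1 p.2),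
      abs_of_nonneg (hαpos p.2), abs_of_nonneg (hxbnn p.1)]
    ring
  have habs2 : ∀ p : G × G, |a p.1 p.2 * α p.1 * (xbar x p.1 * H0)|
      = a p.1 p.2 * (α p.1 * (xbar x p.1 * |H0|)) := by
    intro p
    rw [abs_mul, abs_mul, abs_mul, abs_of_nonneg (hk.nonneg p.1 p.2),
      abs_of_nonneg (hαpos p.1), abs_of_nonneg (hxbnn p.1)]
    ring
  have hf1 : Summable (fun p : G × G => a p.1 p.2 * α p.2 * (xbar x p.1 * H0)) := by
    rw [← summable_abs_iff]
    have hs1 : Summable (fun p : G × G => |a p.2 p.1 * α p.1 * (xbar x p.2 * H0)|) := by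
      have hnn : ∀ p : G × G, (0:ℝ) ≤ |a p.2 p.1 * α p.1 * (xbar x p.2 * H0)| :=
        fun p => abs_nonneg _
      refine (summable_prod_of_nonneg hnn).mpr ⟨fun η => ?_, ?_⟩
      · have heq : (fun ξ : G => |a ξ η * α η * (xbar x ξ * H0)|)
            = fun ξ => (α η * |H0|) * (a ξ η * xbar x ξ) := by
          funext ξ
          exact habs1 (ξ, η)
        rw [heq]
        exact (hax η).mul_left _
      · apply summable_of_ne_finset_zero (s := F)
        intro η hη
        simp [hαF η hη]
    have := hs1.comp_injective (Equiv.prodComm G G).injective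
    exact this.congr fun p => rfl
  have hf2 : Summable (fun p : G × G => a p.1 p.2 * α p.1 * (xbar x p.1 * H0)) := by
    rw [← summable_abs_iff]
    have hnn : ∀ p : G × G, (0:ℝ) ≤ |a p.1 p.2 * α p.1 * (xbar x p.1 * H0)| :=
      fun p => abs_nonneg _
    refine (summable_prod_of_nonneg hnn).mpr ⟨fun ξ => ?_, ?_⟩
    · have heq : (fun η : G => |a ξ η * α ξ * (xbar x ξ * H0)|)
          = fun η => a ξ η * (α ξ * (xbar x ξ * |H0|)) := by
        funext η
        exact habs2 (ξ, η)
      rw [heq]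
      exact (harow ξ).mul_right _
    · apply summable_of_ne_finset_zero (s := F)
      intro ξ hξ
      simp [hαF ξ hξ]
  have claim6 : Summable (fun q : G × G => |a q.1 q.2 * (α q.2 - α q.1) *
      aderiv q.1 (fun p => Hdual p.1 p.2 x) (α, κ)|) := by
    refine Summable.of_nonneg_of_le (fun q => abs_nonneg _) (fun q => ?_)
      (hf1.abs.add hf2.abs)
    rw [had q.1]
    have hLeq : |a q.1 q.2 * (α q.2 - α q.1) * (-xbar x q.1 * H0)|
        = (a q.1 q.2 * (xbar x q.1 * |H0|)) * |α q.2 - α q.1| := by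
      rw [abs_mul, abs_mul, abs_mul, abs_neg, abs_of_nonneg (hk.nonneg q.1 q.2),
        abs_of_nonneg (hxbnn q.1)]
      ring
    have habssub : |α q.2 - α q.1| ≤ α q.2 + α q.1 := by
      rw [abs_le]
      constructor <;> [linarith [hαpos q.1, hαpos q.2]; linarith [hαpos q.1, hαpos q.2]]
    have hcnn : (0:ℝ) ≤ a q.1 q.2 * (xbar x q.1 * |H0|) :=
      mul_nonneg (hk.nonneg q.1 q.2) (mul_nonneg (hxbnn q.1) (abs_nonneg _))
    calc |a q.1 q.2 * (α q.2 - α q.1) * (-xbar x q.1 * H0)|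
        = (a q.1 q.2 * (xbar x q.1 * |H0|)) * |α q.2 - α q.1| := hLeq
      _ ≤ (a q.1 q.2 * (xbar x q.1 * |H0|)) * (α q.2 + α q.1) :=
          mul_le_mul_of_nonneg_left habssub hcnn
      _ = |a q.1 q.2 * α q.2 * (xbar x q.1 * H0)| + |a q.1 q.2 * α q.1 * (xbar x q.1 * H0)| := by
          rw [habs1 q, habs2 q]
          ring
  -- claims 7-10 : finitely supported series
  have claim7 : Summable (fun ξ : G => |α ξ * (K - α ξ / 2) *
      aderiv ξ (fun p => Hdual p.1 p.2 x) (α, κ)|) := by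
    apply summable_of_ne_finset_zero (s := F)
    intro ξ hξ
    simp [hαF ξ hξ]
  have claim8 : Summable (fun ξ : G => |α ξ *
      aderiv ξ (aderiv ξ fun p => Hdual p.1 p.2 x) (α, κ)|) := by
    apply summable_of_ne_finset_zero (s := F)
    intro ξ hξ
    simp [hαF ξ hξ]
  have claim9 : Summable (fun ξ : G => |(kapbar κ ξ : ℝ) *
      aderiv ξ (fun p => Hdual p.1 p.2 x) (α, κ)|) := by
    apply summable_of_ne_finset_zero (s := F)
    intro ξ hξ
    simp [hkapF ξ hξ]
  have claim10 : Summable (fun ξ : G => |(∑ m, (κ ξ m : ℝ) * ((κ ξ m : ℝ) - 1) / 2)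
      - α ξ * (kapbar κ ξ : ℝ) + K * (kapbar κ ξ : ℝ)|) := by
    apply summable_of_ne_finset_zero (s := F)
    intro ξ hξ
    have h1 : ∀ m : Fin M, (κ ξ m : ℝ) = 0 := fun m => by rw [hκFm ξ hξ m]; simp
    simp [hαF ξ hξ, hkapF ξ hξ, h1]
  refine ⟨claim1, claim2, claim3, claim4, claim5, claim6, claim7, claim8, claim9, claim10, ?_⟩
  -- ============ the generator identity ============
  -- summable versions without absolute values
  have claim4' := summable_abs_iff.mp claim4
  have claim1' : ∀ (m : Fin M) (ξ : G), Summable (fun η : G => a η ξ * (x η m - x ξ m)) :=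
    fun m ξ => summable_abs_iff.mp (claim1 m ξ)
  -- column sums of a are 1
  have hcol1 : ∀ ξ : G, ∑' η : G, a η ξ = 1 := fun ξ => (rw_col hk ξ).tsum_eq
  have hrow1 : ∀ ξ : G, ∑' η : G, a ξ η = 1 := fun ξ => (rw_row hk ξ).tsum_eq
  -- ∑ m bsum m ξ = csum ξ - xbar x ξ
  have hbsum_bar : ∀ ξ : G, ∑ m, (∑' η : G, a η ξ * (x η m - x ξ m))
      = (∑' η : G, a η ξ * xbar x η) - xbar x ξ := by
    intro ξ
    rw [← Summable.tsum_finsetSum (fun m _ => claim1' m ξ)]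
    have h1 : ∀ η, ∑ m, a η ξ * (x η m - x ξ m) = a η ξ * xbar x η - a η ξ * xbar x ξ := by
      intro η
      rw [← Finset.mul_sum, Finset.sum_sub_distrib]
      unfold xbar
      ring
    rw [tsum_congr h1, Summable.tsum_sub (hax ξ) ((hacol ξ).mul_right (xbar x ξ))]
    congr 1
    rw [tsum_mul_right, hcol1 ξ, one_mul]
  -- decrement identities
  have keyxH : ∀ (m : Fin M) (ξ : G),
      (κ ξ m : ℝ) * (x ξ m * Hdual α (fun η n => κ η n - ekap m ξ η n) x)
        = (κ ξ m : ℝ) * H0 := by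
    intro m ξ
    rcases Nat.eq_zero_or_pos (κ ξ m) with h0 | hpos
    · simp [h0]
    · rw [hH0, Hdual_decr α κ hκfin m ξ x hpos]
  have keyxHmm : ∀ (m : Fin M) (ξ : G),
      (κ ξ m : ℝ) * ((κ ξ m - 1 : ℕ) : ℝ) *
        (x ξ m * Hdual α (fun η n => κ η n - ekap m ξ η n - ekap m ξ η n) x)
      = (κ ξ m : ℝ) * ((κ ξ m : ℝ) - 1) *
        Hdual α (fun η n => κ η n - ekap m ξ η n) x := by
    intro m ξ
    rcases Nat.lt_or_ge (κ ξ m) 2 with h2 | h2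
    · interval_cases h : κ ξ m <;> simp [h]
    · have hge : 1 ≤ (fun η n => κ η n - ekap m ξ η n) ξ m := by
        simp only [ekap, and_self, if_true]
        omega
      have hd : Hdual α (fun η n => κ η n - ekap m ξ η n) x
          = x ξ m * Hdual α (fun η n => κ η n - ekap m ξ η n - ekap m ξ η n) x :=
        Hdual_decr α (fun η n => κ η n - ekap m ξ η n) (supp_sub_e κ hκfin m ξ) m ξ x hge
      rw [hd]
      have hcast : ((κ ξ m - 1 : ℕ) : ℝ) = (κ ξ m : ℝ) - 1 := by
        have : 1 ≤ κ ξ m := by omega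
        push_cast [this]
        ring
      rw [hcast]
  -- reduction of the LHS (diffusion generator applied to H)
  have hLHS : diffGen a (fun _ => γ) (fun _ => K) (fun _ _ => lam) (fun y => Hdual α κ y) x
      = (∑ m, ∑ ξ ∈ F, ((∑' η : G, a η ξ * (x η m - x ξ m)) + γ * x ξ m * (K - lam * xbar x ξ))
          * (-α ξ * H0 + (κ ξ m : ℝ) * Hdual α (fun η n => κ η n - ekap m ξ η n) x))
        + (1/2) * ∑ m, ∑ ξ ∈ F, γ * x ξ m *
            (α ξ ^ 2 * H0
              - 2 * α ξ * (κ ξ m : ℝ) * Hdual α (fun η n => κ η n - ekap m ξ η n) x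
              + (κ ξ m : ℝ) * ((κ ξ m - 1 : ℕ) : ℝ) *
                Hdual α (fun η n => κ η n - ekap m ξ η n - ekap m ξ η n) x) := by
    unfold diffGen
    congr 1
    · -- first order part
      have hptw : ∀ q : Fin M × G,
          ((∑' η : G, a η q.2 * (x η q.1 - x q.2 q.1))
            + (fun _ => γ) q.1 * x q.2 q.1 * ((fun _ => K) q.1 - ∑ n, (fun _ _ => lam) q.1 n * x q.2 n))
            * pderiv q.1 q.2 (fun y => Hdual α κ y) x
          = ((∑' η : G, a η q.2 * (x η q.1 - x q.2 q.1)) + γ * x q.2 q.1 * (K - lam * xbar x q.2))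
            * (-α q.2 * H0 + (κ q.2 q.1 : ℝ) *
                Hdual α (fun η n => κ η n - ekap q.1 q.2 η n) x) := by
        intro q
        rw [hpd q.1 q.2 x]
        have : (∑ n, (fun _ _ => lam) q.1 n * x q.2 n) = lam * xbar x q.2 := by
          rw [← Finset.mul_sum]
          rfl
        rw [this, hH0]
      rw [tsum_congr hptw, tsum_eq_sum (s := (Finset.univ : Finset (Fin M)) ×ˢ F) ?hz,
        Finset.sum_product]
      case hz =>
        intro q hq
        have hq2 : q.2 ∉ F := by
          by_contra h
          exact hq (Finset.mem_product.mpr ⟨Finset.mem_univ _, h⟩)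
        rw [hαF q.2 hq2, hκFm q.2 hq2 q.1]
        simp
    · -- second order part
      congr 1
      have hptw : ∀ q : Fin M × G,
          (fun _ => γ) q.1 * x q.2 q.1 * pderiv q.1 q.2 (pderiv q.1 q.2 fun y => Hdual α κ y) x
          = γ * x q.2 q.1 *
            (α q.2 ^ 2 * H0
              - 2 * α q.2 * (κ q.2 q.1 : ℝ) * Hdual α (fun η n => κ η n - ekap q.1 q.2 η n) x
              + (κ q.2 q.1 : ℝ) * ((κ q.2 q.1 - 1 : ℕ) : ℝ) *
                Hdual α (fun η n => κ η n - ekap q.1 q.2 η n - ekap q.1 q.2 η n) x) := by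
        intro q
        rw [hpd2 q.1 q.2, hH0]
      rw [tsum_congr hptw, tsum_eq_sum (s := (Finset.univ : Finset (Fin M)) ×ˢ F) ?hz2,
        Finset.sum_product]
      case hz2 =>
        intro q hq
        have hq2 : q.2 ∉ F := by
          by_contra h
          exact hq (Finset.mem_product.mpr ⟨Finset.mem_univ _, h⟩)
        rw [hαF q.2 hq2, hκFm q.2 hq2 q.1]
        simp
  -- reduction of the dual generator terms
  have hunfold : dualGen a γ K lam (fun p => Hdual p.1 p.2 x) (α, κ)
      = (∑' q : Fin M × G × G, (κ q.2.1 q.1 : ℝ) * a q.2.2 q.2.1 *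
          (Hdual α (fun η n => κ η n + ekap q.1 q.2.2 η n - ekap q.1 q.2.1 η n) x
            - Hdual α κ x))
        + γ * (∑' q : Fin M × G, ((κ q.2 q.1 : ℝ) * ((κ q.2 q.1 : ℝ) - 1) / 2) *
            (Hdual α (fun η n => κ η n - ekap q.1 q.2 η n) x - Hdual α κ x))
        + (∑' q : G × G, a q.1 q.2 * (α q.2 - α q.1) *
            aderiv q.1 (fun p => Hdual p.1 p.2 x) (α, κ))
        + γ * (∑' ξ : G, α ξ * (K - α ξ / 2) *
            aderiv ξ (fun p => Hdual p.1 p.2 x) (α, κ))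
        + γ * lam * (∑' ξ : G, α ξ *
            aderiv ξ (aderiv ξ fun p => Hdual p.1 p.2 x) (α, κ))
        + γ * lam * (∑' ξ : G, (kapbar κ ξ : ℝ) *
            aderiv ξ (fun p => Hdual p.1 p.2 x) (α, κ)) := rfl
  -- T1
  have hT1 : (∑' q : Fin M × G × G, (κ q.2.1 q.1 : ℝ) * a q.2.2 q.2.1 *
        (Hdual α (fun η n => κ η n + ekap q.1 q.2.2 η n - ekap q.1 q.2.1 η n) x
          - Hdual α κ x))
      = ∑ m, ∑ ξ ∈ F, (∑' η : G, a η ξ * (x η m - x ξ m)) *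
          ((κ ξ m : ℝ) * Hdual α (fun η n => κ η n - ekap m ξ η n) x) := by
    have hptw : ∀ q : Fin M × G × G,
        (κ q.2.1 q.1 : ℝ) * a q.2.2 q.2.1 *
          (Hdual α (fun η n => κ η n + ekap q.1 q.2.2 η n - ekap q.1 q.2.1 η n) x
            - Hdual α κ x)
        = (a q.2.2 q.2.1 * (x q.2.2 q.1 - x q.2.1 q.1)) *
            ((κ q.2.1 q.1 : ℝ) * Hdual α (fun η n => κ η n - ekap q.1 q.2.1 η n) x) := by
      intro q
      have h := key4 q.1 q.2.1 q.2.2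
      calc (κ q.2.1 q.1 : ℝ) * a q.2.2 q.2.1 *
            (Hdual α (fun η n => κ η n + ekap q.1 q.2.2 η n - ekap q.1 q.2.1 η n) x
              - Hdual α κ x)
          = a q.2.2 q.2.1 * ((κ q.2.1 q.1 : ℝ) *
              (Hdual α (fun η n => κ η n + ekap q.1 q.2.2 η n - ekap q.1 q.2.1 η n) x
                - Hdual α κ x)) := by ring
        _ = a q.2.2 q.2.1 * ((κ q.2.1 q.1 : ℝ) * ((x q.2.2 q.1 - x q.2.1 q.1) *
              Hdual α (fun η n => κ η n - ekap q.1 q.2.1 η n) x)) := by rw [h]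
        _ = (a q.2.2 q.2.1 * (x q.2.2 q.1 - x q.2.1 q.1)) *
            ((κ q.2.1 q.1 : ℝ) * Hdual α (fun η n => κ η n - ekap q.1 q.2.1 η n) x) := by ring
    have hg : Summable (fun q : Fin M × G × G =>
        (a q.2.2 q.2.1 * (x q.2.2 q.1 - x q.2.1 q.1)) *
          ((κ q.2.1 q.1 : ℝ) * Hdual α (fun η n => κ η n - ekap q.1 q.2.1 η n) x)) :=
      claim4'.congr hptw
    rw [tsum_congr hptw, Summable.tsum_prod' hg hg.prod_factor, tsum_fintype]
    apply Finset.sum_congr rfl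
    intro m _
    have hgm := hg.prod_factor m
    rw [Summable.tsum_prod' hgm hgm.prod_factor, tsum_eq_sum (s := F) ?hz1]
    case hz1 =>
      intro ξ hξ
      have h0 : (κ ξ m : ℝ) = 0 := by rw [hκFm ξ hξ m]; simp
      simp [h0]
    apply Finset.sum_congr rfl
    intro ξ _
    have hptc : ∀ c : G,
        a (m, ξ, c).2.2 (m, ξ, c).2.1 * (x (m, ξ, c).2.2 (m, ξ, c).1 - x (m, ξ, c).2.1 (m, ξ, c).1) *
          ((κ (m, ξ, c).2.1 (m, ξ, c).1 : ℝ) *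
            Hdual α (fun η n => κ η n - ekap (m, ξ, c).1 (m, ξ, c).2.1 η n) x)
        = a c ξ * (x c m - x ξ m) *
            ((κ ξ m : ℝ) * Hdual α (fun η n => κ η n - ekap m ξ η n) x) :=
      fun c => rfl
    rw [tsum_congr hptc, tsum_mul_right]
  -- T2
  have hT2 : (∑' q : Fin M × G, ((κ q.2 q.1 : ℝ) * ((κ q.2 q.1 : ℝ) - 1) / 2) *
        (Hdual α (fun η n => κ η n - ekap q.1 q.2 η n) x - Hdual α κ x))
      = ∑ m, ∑ ξ ∈ F, ((κ ξ m : ℝ) * ((κ ξ m : ℝ) - 1) / 2) *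
          (Hdual α (fun η n => κ η n - ekap m ξ η n) x - H0) := by
    have hz2 : ∀ q : Fin M × G, q ∉ (Finset.univ : Finset (Fin M)) ×ˢ F →
        ((κ q.2 q.1 : ℝ) * ((κ q.2 q.1 : ℝ) - 1) / 2) *
          (Hdual α (fun η n => κ η n - ekap q.1 q.2 η n) x - Hdual α κ x) = 0 := by
      intro q hq
      have hq2 : q.2 ∉ F := by
        by_contra h
        exact hq (Finset.mem_product.mpr ⟨Finset.mem_univ _, h⟩)
      have h0 : (κ q.2 q.1 : ℝ) = 0 := by rw [hκFm q.2 hq2 q.1]; simp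
      simp [h0]
    rw [tsum_eq_sum (s := (Finset.univ : Finset (Fin M)) ×ˢ F) hz2, Finset.sum_product]
  -- T3
  have hT3 : (∑' q : G × G, a q.1 q.2 * (α q.2 - α q.1) *
        aderiv q.1 (fun p => Hdual p.1 p.2 x) (α, κ))
      = (∑ ξ ∈ F, α ξ * (xbar x ξ * H0))
        - ∑ ξ ∈ F, (∑' ζ : G, a ζ ξ * xbar x ζ) * (α ξ * H0) := by
    have hptw : ∀ q : G × G, a q.1 q.2 * (α q.2 - α q.1) *
          aderiv q.1 (fun p => Hdual p.1 p.2 x) (α, κ)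
        = a q.1 q.2 * α q.1 * (xbar x q.1 * H0) - a q.1 q.2 * α q.2 * (xbar x q.1 * H0) := by
      intro q
      rw [had q.1]
      ring
    rw [tsum_congr hptw, Summable.tsum_sub hf2 hf1]
    congr 1
    · -- ∑' f2
      rw [Summable.tsum_prod' hf2 hf2.prod_factor, tsum_eq_sum (s := F) ?hz3]
      case hz3 =>
        intro ξ hξ
        simp [hαF ξ hξ]
      apply Finset.sum_congr rfl
      intro ξ _
      have h1 : ∀ η : G, a ξ η * α ξ * (xbar x ξ * H0)
          = a ξ η * (α ξ * (xbar x ξ * H0)) := fun η => by ring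
      rw [tsum_congr h1, tsum_mul_right, hrow1 ξ, one_mul]
    · -- ∑' f1
      have hswap : (∑' q : G × G, a q.1 q.2 * α q.2 * (xbar x q.1 * H0))
          = ∑' q : G × G, a q.2 q.1 * α q.1 * (xbar x q.2 * H0) :=
        ((Equiv.prodComm G G).tsum_eq
          (fun q : G × G => a q.1 q.2 * α q.2 * (xbar x q.1 * H0))).symm
      have hf1s : Summable (fun q : G × G => a q.2 q.1 * α q.1 * (xbar x q.2 * H0)) :=
        hf1.comp_injective (Equiv.prodComm G G).injective
      rw [hswap, Summable.tsum_prod' hf1s hf1s.prod_factor, tsum_eq_sum (s := F) ?hz4]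
      case hz4 =>
        intro η hη
        simp [hαF η hη]
      apply Finset.sum_congr rfl
      intro η _
      have h1 : ∀ ζ : G, a ζ η * α η * (xbar x ζ * H0)
          = (a ζ η * xbar x ζ) * (α η * H0) := fun ζ => by ring
      rw [tsum_congr h1, tsum_mul_right]
  -- T4
  have hT4 : (∑' ξ : G, α ξ * (K - α ξ / 2) *
        aderiv ξ (fun p => Hdual p.1 p.2 x) (α, κ))
      = ∑ ξ ∈ F, α ξ * (K - α ξ / 2) * (-xbar x ξ * H0) := by
    have hptw : ∀ ξ : G, α ξ * (K - α ξ / 2) * aderiv ξ (fun p => Hdual p.1 p.2 x) (α, κ)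
        = α ξ * (K - α ξ / 2) * (-xbar x ξ * H0) := fun ξ => by rw [had ξ]
    rw [tsum_congr hptw]
    apply tsum_eq_sum
    intro ξ hξ
    simp [hαF ξ hξ]
  -- T5
  have hT5 : (∑' ξ : G, α ξ *
        aderiv ξ (aderiv ξ fun p => Hdual p.1 p.2 x) (α, κ))
      = ∑ ξ ∈ F, α ξ * (xbar x ξ ^ 2 * H0) := by
    have hptw : ∀ ξ : G, α ξ * aderiv ξ (aderiv ξ fun p => Hdual p.1 p.2 x) (α, κ)
        = α ξ * (xbar x ξ ^ 2 * H0) := fun ξ => by rw [had2 ξ]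
    rw [tsum_congr hptw]
    apply tsum_eq_sum
    intro ξ hξ
    simp [hαF ξ hξ]
  -- T6
  have hT6 : (∑' ξ : G, (kapbar κ ξ : ℝ) *
        aderiv ξ (fun p => Hdual p.1 p.2 x) (α, κ))
      = ∑ ξ ∈ F, (kapbar κ ξ : ℝ) * (-xbar x ξ * H0) := by
    have hptw : ∀ ξ : G, (kapbar κ ξ : ℝ) * aderiv ξ (fun p => Hdual p.1 p.2 x) (α, κ)
        = (kapbar κ ξ : ℝ) * (-xbar x ξ * H0) := fun ξ => by rw [had ξ]
    rw [tsum_congr hptw]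
    apply tsum_eq_sum
    intro ξ hξ
    simp [hkapF ξ hξ]
  -- beta
  have hbeta : betaDual γ K α κ
      = γ * ∑ ξ ∈ F, ((∑ m, (κ ξ m : ℝ) * ((κ ξ m : ℝ) - 1) / 2)
          - α ξ * (kapbar κ ξ : ℝ) + K * (kapbar κ ξ : ℝ)) := by
    unfold betaDual
    congr 1
    apply tsum_eq_sum
    intro ξ hξ
    have h1 : ∀ m : Fin M, (κ ξ m : ℝ) = 0 := fun m => by rw [hκFm ξ hξ m]; simp
    simp [hαF ξ hξ, hkapF ξ hξ, h1]
  -- cast of kapbar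
  have hkapcast : ∀ ξ : G, (kapbar κ ξ : ℝ) = ∑ m, (κ ξ m : ℝ) := by
    intro ξ
    unfold kapbar
    exact Nat.cast_sum _ _
  -- swap lemmas
  have hsw1 : (∑ m, ∑ ξ ∈ F, ((∑' η : G, a η ξ * (x η m - x ξ m)) + γ * x ξ m * (K - lam * xbar x ξ))
        * (-α ξ * H0 + (κ ξ m : ℝ) * Hdual α (fun η n => κ η n - ekap m ξ η n) x))
      = ∑ ξ ∈ F, ∑ m, ((∑' η : G, a η ξ * (x η m - x ξ m)) + γ * x ξ m * (K - lam * xbar x ξ))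
        * (-α ξ * H0 + (κ ξ m : ℝ) * Hdual α (fun η n => κ η n - ekap m ξ η n) x) :=
    Finset.sum_comm
  have hsw2 : (∑ m, ∑ ξ ∈ F, γ * x ξ m *
        (α ξ ^ 2 * H0
          - 2 * α ξ * (κ ξ m : ℝ) * Hdual α (fun η n => κ η n - ekap m ξ η n) x
          + (κ ξ m : ℝ) * ((κ ξ m - 1 : ℕ) : ℝ) *
            Hdual α (fun η n => κ η n - ekap m ξ η n - ekap m ξ η n) x))
      = ∑ ξ ∈ F, ∑ m, γ * x ξ m *
        (α ξ ^ 2 * H0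
          - 2 * α ξ * (κ ξ m : ℝ) * Hdual α (fun η n => κ η n - ekap m ξ η n) x
          + (κ ξ m : ℝ) * ((κ ξ m - 1 : ℕ) : ℝ) *
            Hdual α (fun η n => κ η n - ekap m ξ η n - ekap m ξ η n) x) :=
    Finset.sum_comm
  have hsw3 : (∑ m, ∑ ξ ∈ F, (∑' η : G, a η ξ * (x η m - x ξ m)) *
        ((κ ξ m : ℝ) * Hdual α (fun η n => κ η n - ekap m ξ η n) x))
      = ∑ ξ ∈ F, ∑ m, (∑' η : G, a η ξ * (x η m - x ξ m)) *
        ((κ ξ m : ℝ) * Hdual α (fun η n => κ η n - ekap m ξ η n) x) :=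
    Finset.sum_comm
  have hsw4 : (∑ m, ∑ ξ ∈ F, ((κ ξ m : ℝ) * ((κ ξ m : ℝ) - 1) / 2) *
        (Hdual α (fun η n => κ η n - ekap m ξ η n) x - H0))
      = ∑ ξ ∈ F, ∑ m, ((κ ξ m : ℝ) * ((κ ξ m : ℝ) - 1) / 2) *
        (Hdual α (fun η n => κ η n - ekap m ξ η n) x - H0) :=
    Finset.sum_comm
  rw [hLHS, hunfold, hT1, hT2, hT3, hT4, hT5, hT6, hbeta, hsw1, hsw2, hsw3, hsw4]
  simp only [Finset.mul_sum, Finset.sum_mul, ← Finset.sum_add_distrib, ← Finset.sum_sub_distrib]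
  refine Finset.sum_congr rfl fun ξ hξ => ?_
  -- per-site identity
  have hS4 : ∑ m, (κ ξ m : ℝ) * (x ξ m * Hdual α (fun η n => κ η n - ekap m ξ η n) x)
      = (kapbar κ ξ : ℝ) * H0 := by
    rw [Finset.sum_congr rfl (fun m _ => keyxH m ξ), ← Finset.sum_mul, ← hkapcast ξ]
  have hS6 : ∑ m, (κ ξ m : ℝ) * ((κ ξ m - 1 : ℕ) : ℝ) *
        (x ξ m * Hdual α (fun η n => κ η n - ekap m ξ η n - ekap m ξ η n) x)
      = ∑ m, (κ ξ m : ℝ) * ((κ ξ m : ℝ) - 1) *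
          Hdual α (fun η n => κ η n - ekap m ξ η n) x :=
    Finset.sum_congr rfl (fun m _ => keyxHmm m ξ)
  have hexp : ∀ m ∈ (Finset.univ : Finset (Fin M)),
      ((∑' (η : G), a η ξ * (x η m - x ξ m)) + γ * x ξ m * (K - lam * xbar x ξ)) *
          (-α ξ * H0 + (κ ξ m : ℝ) * Hdual α (fun η n => κ η n - ekap m ξ η n) x) +
        1 / 2 *
          (γ * x ξ m *
            (α ξ ^ 2 * H0 - 2 * α ξ * (κ ξ m : ℝ) * Hdual α (fun η n => κ η n - ekap m ξ η n) x +
              (κ ξ m : ℝ) * ((κ ξ m - 1 : ℕ) : ℝ) *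
                Hdual α (fun η n => κ η n - ekap m ξ η n - ekap m ξ η n) x))
      = (∑' (η : G), a η ξ * (x η m - x ξ m)) * (-α ξ * H0)
        + (∑' (η : G), a η ξ * (x η m - x ξ m)) *
            ((κ ξ m : ℝ) * Hdual α (fun η n => κ η n - ekap m ξ η n) x)
        + x ξ m * (γ * (K - lam * xbar x ξ) * (-α ξ * H0))
        + ((κ ξ m : ℝ) * (x ξ m * Hdual α (fun η n => κ η n - ekap m ξ η n) x)) *
            (γ * (K - lam * xbar x ξ) - γ * α ξ)
        + x ξ m * (γ / 2 * (α ξ ^ 2 * H0))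
        + ((κ ξ m : ℝ) * ((κ ξ m - 1 : ℕ) : ℝ) *
            (x ξ m * Hdual α (fun η n => κ η n - ekap m ξ η n - ekap m ξ η n) x)) * (γ / 2) := by
    intro m _
    ring
  have hLLs : (∑ m, (((∑' (η : G), a η ξ * (x η m - x ξ m)) + γ * x ξ m * (K - lam * xbar x ξ)) *
          (-α ξ * H0 + (κ ξ m : ℝ) * Hdual α (fun η n => κ η n - ekap m ξ η n) x) +
        1 / 2 *
          (γ * x ξ m *
            (α ξ ^ 2 * H0 - 2 * α ξ * (κ ξ m : ℝ) * Hdual α (fun η n => κ η n - ekap m ξ η n) x +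
              (κ ξ m : ℝ) * ((κ ξ m - 1 : ℕ) : ℝ) *
                Hdual α (fun η n => κ η n - ekap m ξ η n - ekap m ξ η n) x))))
      = ((∑' (η : G), a η ξ * xbar x η) - xbar x ξ) * (-α ξ * H0)
        + (∑ m, (∑' (η : G), a η ξ * (x η m - x ξ m)) *
            ((κ ξ m : ℝ) * Hdual α (fun η n => κ η n - ekap m ξ η n) x))
        + xbar x ξ * (γ * (K - lam * xbar x ξ) * (-α ξ * H0))
        + ((kapbar κ ξ : ℝ) * H0) * (γ * (K - lam * xbar x ξ) - γ * α ξ)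
        + xbar x ξ * (γ / 2 * (α ξ ^ 2 * H0))
        + (∑ m, (κ ξ m : ℝ) * ((κ ξ m : ℝ) - 1) *
            Hdual α (fun η n => κ η n - ekap m ξ η n) x) * (γ / 2) := by
    rw [Finset.sum_congr rfl hexp, Finset.sum_add_distrib, Finset.sum_add_distrib,
      Finset.sum_add_distrib, Finset.sum_add_distrib, Finset.sum_add_distrib,
      ← Finset.sum_mul, ← Finset.sum_mul, ← Finset.sum_mul, ← Finset.sum_mul, ← Finset.sum_mul,
      hbsum_bar ξ, hS4, hS6,
      show (∑ m, x ξ m) = xbar x ξ from rfl]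
  have hexp2 : ∀ m ∈ (Finset.univ : Finset (Fin M)),
      ((∑' (η : G), a η ξ * (x η m - x ξ m)) *
          ((κ ξ m : ℝ) * Hdual α (fun η n => κ η n - ekap m ξ η n) x) +
        γ * ((κ ξ m : ℝ) * ((κ ξ m : ℝ) - 1) / 2 *
          (Hdual α (fun η n => κ η n - ekap m ξ η n) x - H0)))
      = (∑' (η : G), a η ξ * (x η m - x ξ m)) *
          ((κ ξ m : ℝ) * Hdual α (fun η n => κ η n - ekap m ξ η n) x)
        + ((κ ξ m : ℝ) * ((κ ξ m : ℝ) - 1) *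
            Hdual α (fun η n => κ η n - ekap m ξ η n) x) * (γ / 2)
        + ((κ ξ m : ℝ) * ((κ ξ m : ℝ) - 1) / 2) * (-γ * H0) := by
    intro m _
    ring
  have hRRs : (∑ m, ((∑' (η : G), a η ξ * (x η m - x ξ m)) *
          ((κ ξ m : ℝ) * Hdual α (fun η n => κ η n - ekap m ξ η n) x) +
        γ * ((κ ξ m : ℝ) * ((κ ξ m : ℝ) - 1) / 2 *
          (Hdual α (fun η n => κ η n - ekap m ξ η n) x - H0))))
      = (∑ m, (∑' (η : G), a η ξ * (x η m - x ξ m)) *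
            ((κ ξ m : ℝ) * Hdual α (fun η n => κ η n - ekap m ξ η n) x))
        + (∑ m, (κ ξ m : ℝ) * ((κ ξ m : ℝ) - 1) *
            Hdual α (fun η n => κ η n - ekap m ξ η n) x) * (γ / 2)
        + (∑ m, (κ ξ m : ℝ) * ((κ ξ m : ℝ) - 1) / 2) * (-γ * H0) := by
    rw [Finset.sum_congr rfl hexp2, Finset.sum_add_distrib, Finset.sum_add_distrib,
      ← Finset.sum_mul, ← Finset.sum_mul]
  rw [hLLs, hRRs]
  ring
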